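/- arXiv:1108.1776 — 2 statements merged into one kernel-verified Lean document; each statement's English description precedes it below -/
import Mathlib

section
/- Let (W,S) be a Coxeter system, Q a word with δ(Q) = π, and let F and F' = (F \ {q}) ∪ {q'} be two adjacent facets of Δ(Q,π) with q to the left of q' in Q. Let t_q = w_q q w_q⁻¹ where w_q is the product of the letters of Q \ F strictly before q. Then for every position p of Q: r_{F'}(p) = t_q(r_F(p)) if p lies strictly between q and q' or p = q', and r_{F'}(p) = r_F(p) otherwise. -/
open List

namespace SubwordComplex

variable {B : Type*} [DecidableEq B] [Inhabited B] {W : Type*} [Group W]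
variable {M : CoxeterMatrix B} (cs : CoxeterSystem M W)

/-- The word formed by the letters of `Q` at positions not in `F`. -/
def complement (Q : List B) (F : Finset ℕ) : List B :=
  ((Q.zipIdx.map Prod.swap).filter (fun p => p.1 ∉ F)).map Prod.snd

/-- `L` contains a reduced expression for `π` as a subword. -/
def ContainsReduced (L : List B) (π : W) : Prop :=
  ∃ L' : List B, L'.Sublist L ∧ cs.IsReduced L' ∧ cs.wordProd L' = π

/-- `F` is a face of the subword complex `Δ(Q, π)`. -/
def IsFace (Q : List B) (π : W) (F : Finset ℕ) : Prop :=
  F ⊆ Finset.range Q.length ∧ ContainsReduced cs (complement Q F) π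

/-- `F` is a facet (maximal face) of the subword complex `Δ(Q, π)`. -/
def IsFacet (Q : List B) (π : W) (F : Finset ℕ) : Prop :=
  IsFace cs Q π F ∧ ∀ F' : Finset ℕ, IsFace cs Q π F' → F ⊆ F' → F' = F

/-- `w₀` is the longest element. -/
def IsLongest (w₀ : W) : Prop := ∀ w : W, cs.length w ≤ cs.length w₀

/-- The Demazure product of a word. -/
noncomputable def demazure (Q : List B) : W :=
  Q.foldl (fun w i => if cs.length w < cs.length (w * cs.simple i) then w * cs.simple i
    else w) 1

/-- A reduced word for a Coxeter element: each generator appears exactly once. -/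
def IsCoxeterWord (c : List B) : Prop := c.Nodup ∧ ∀ b : B, b ∈ c

/-- The letter of the infinite word `c^∞` at position `i`. -/
def cInfLetter (c : List B) (i : ℕ) : B := c.getD (i % c.length) default

/-- `P` is the lexicographically first increasing list of positions in `c^∞` whose
associated word is a reduced word for `w`. -/
def IsSortingIndices (c : List B) (w : W) (P : List ℕ) : Prop :=
  P.Chain' (· < ·) ∧ cs.IsReduced (P.map (cInfLetter c)) ∧
    cs.wordProd (P.map (cInfLetter c)) = w ∧
    ∀ P' : List ℕ, P'.Chain' (· < ·) → cs.IsReduced (P'.map (cInfLetter c)) →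
      cs.wordProd (P'.map (cInfLetter c)) = w → P = P' ∨ List.Lex (· < ·) P P'

/-- `sw` is the `c`-sorting word of `w`. -/
def IsSortingWord (c : List B) (w : W) (sw : List B) : Prop :=
  ∃ P : List ℕ, IsSortingIndices cs c w P ∧ sw = P.map (cInfLetter c)

/-- One step of interchanging two adjacent commuting letters. -/
def CommStep (L L' : List B) : Prop :=
  ∃ (u v : List B) (a b : B),
    cs.simple a * cs.simple b = cs.simple b * cs.simple a ∧
    L = u ++ a :: b :: v ∧ L' = u ++ b :: a :: v

/-- Two words coincide up to commutations. -/
def CommEquiv (L L' : List B) : Prop := Relation.EqvGen (CommStep cs) L L'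

/-- The (combinatorial model of the) root `w(α_s)`: a pair consisting of the
reflection `w s w⁻¹` and a sign which is `true` if the root is positive. -/
noncomputable def rootPair (w : W) (s : B) : W × Bool :=
  (w * cs.simple s * w⁻¹, decide (cs.length w < cs.length (w * cs.simple s)))

/-- The negative of a root in the combinatorial model. -/
def negRoot (r : W × Bool) : W × Bool := (r.1, !r.2)

/-- The product of the letters of `Q \ F` occurring strictly before position `q`. -/
def prefixProd (Q : List B) (F : Finset ℕ) (q : ℕ) : W :=
  cs.wordProd (((Q.zipIdx.map Prod.swap).filter (fun p => p.1 ∉ F ∧ p.1 < q)).map Prod.snd)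

/-- The root function `r_F` of a facet `F`, in the combinatorial model. -/
noncomputable def rootF (Q : List B) (F : Finset ℕ) (q : ℕ) : W × Bool :=
  rootPair cs (prefixProd cs Q F q) (Q.getD q default)


private lemma zipIdx_swap_map_fst {α : Type*} (Q : List α) :
    ((Q.zipIdx.map Prod.swap).map Prod.fst) = range Q.length := by
  rw [map_map]
  have : (Prod.fst ∘ Prod.swap : α × ℕ → ℕ) = Prod.snd := rfl
  rw [this, zipIdx_map_snd, range_eq_range']

private lemma mem_zipIdx_swap_iff {α : Type*} {Q : List α} {i : ℕ} {x : α} :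
    (i, x) ∈ Q.zipIdx.map Prod.swap ↔ Q[i]? = some x := by
  rw [mem_map]
  constructor
  · rintro ⟨⟨a, b⟩, h, he⟩
    simp only [Prod.swap, Prod.mk.injEq] at he
    obtain ⟨rfl, rfl⟩ := he
    exact mem_zipIdx_iff_getElem?.mp h
  · intro h
    exact ⟨(x, i), mem_zipIdx_iff_getElem?.mpr h, rfl⟩

private lemma filter_fst_mem_of_sublist {α : Type*} {l E : List (ℕ × α)} (h : E <+ l)
    (hn : (l.map Prod.fst).Nodup) :
    l.filter (fun x => decide (x.1 ∈ E.map Prod.fst)) = E := by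
  induction h with
  | slnil => simp
  | @cons l₁ l₂ a h ih =>
    rw [map_cons, nodup_cons] at hn
    rw [filter_cons]
    have ha : a.1 ∉ l₁.map Prod.fst := fun hmem => hn.1 ((h.map Prod.fst).subset hmem)
    simp only [ha, decide_false, if_false]
    exact ih hn.2
  | @cons_cons l₁ l₂ a h ih =>
    rw [map_cons, nodup_cons] at hn
    rw [filter_cons]
    simp only [map_cons, mem_cons, true_or, decide_true, if_true]
    congr 1
    rw [List.filter_congr (q := fun x => decide (x.1 ∈ l₁.map Prod.fst))
      (fun x hx => by
        have : x.1 ≠ a.1 := fun hxa => hn.1 (hxa ▸ mem_map_of_mem (f := Prod.fst) hx)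
        simp [this])]
    exact ih hn.2

private lemma filter_split_mem {α : Type*} {l : List (ℕ × α)}
    (hs : l.Pairwise (fun a b => a.1 < b.1)) {zi : ℕ} {zb : α} (hz : (zi, zb) ∈ l)
    (P : ℕ × α → Bool) :
    l.filter (fun x => P x || decide (x.1 = zi)) =
      l.filter (fun x => P x && decide (x.1 < zi)) ++
        (zi, zb) :: l.filter (fun x => P x && decide (zi < x.1)) := by
  obtain ⟨u, v, rfl⟩ := List.append_of_mem hz
  rw [List.pairwise_append] at hs
  obtain ⟨hu, hv', huv⟩ := hs
  rw [List.pairwise_cons] at hv'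
  have hub : ∀ x ∈ u, x.1 < zi := fun x hx => huv x hx (zi, zb) mem_cons_self
  have hvb : ∀ x ∈ v, zi < x.1 := hv'.1
  have e1 : u.filter (fun x => P x || decide (x.1 = zi)) = u.filter P :=
    List.filter_congr fun x hx => by simp [Nat.ne_of_lt (hub x hx)]
  have e2 : u.filter (fun x => P x && decide (x.1 < zi)) = u.filter P :=
    List.filter_congr fun x hx => by simp [hub x hx]
  have e3 : u.filter (fun x => P x && decide (zi < x.1)) = [] :=
    List.filter_eq_nil_iff.mpr fun x hx => by simp [Nat.le_of_lt (hub x hx), Nat.not_lt]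
  have e4 : v.filter (fun x => P x || decide (x.1 = zi)) = v.filter P :=
    List.filter_congr fun x hx => by simp [Nat.ne_of_gt (hvb x hx)]
  have e5 : v.filter (fun x => P x && decide (x.1 < zi)) = [] :=
    List.filter_eq_nil_iff.mpr fun x hx => by simp [Nat.le_of_lt (hvb x hx), Nat.not_lt]
  have e6 : v.filter (fun x => P x && decide (zi < x.1)) = v.filter P :=
    List.filter_congr fun x hx => by simp [hvb x hx]
  simp only [filter_append, filter_cons, e1, e2, e3, e4, e5, e6]
  simp

private lemma filter_split_not_mem {α : Type*} {l : List (ℕ × α)}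
    (hs : l.Pairwise (fun a b => a.1 < b.1)) {zi : ℕ} {zb : α} (hz : (zi, zb) ∈ l)
    {P : ℕ × α → Bool} (hPz : P (zi, zb) = false) :
    l.filter P =
      l.filter (fun x => P x && decide (x.1 < zi)) ++
        l.filter (fun x => P x && decide (zi < x.1)) := by
  obtain ⟨u, v, rfl⟩ := List.append_of_mem hz
  rw [List.pairwise_append] at hs
  obtain ⟨hu, hv', huv⟩ := hs
  rw [List.pairwise_cons] at hv'
  have hub : ∀ x ∈ u, x.1 < zi := fun x hx => huv x hx (zi, zb) mem_cons_self
  have hvb : ∀ x ∈ v, zi < x.1 := hv'.1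
  have e2 : u.filter (fun x => P x && decide (x.1 < zi)) = u.filter P :=
    List.filter_congr fun x hx => by simp [hub x hx]
  have e3 : u.filter (fun x => P x && decide (zi < x.1)) = [] :=
    List.filter_eq_nil_iff.mpr fun x hx => by simp [Nat.le_of_lt (hub x hx), Nat.not_lt]
  have e5 : v.filter (fun x => P x && decide (x.1 < zi)) = [] :=
    List.filter_eq_nil_iff.mpr fun x hx => by simp [Nat.le_of_lt (hvb x hx), Nat.not_lt]
  have e6 : v.filter (fun x => P x && decide (zi < x.1)) = v.filter P :=
    List.filter_congr fun x hx => by simp [hvb x hx]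
  simp only [filter_append, filter_cons, e2, e3, e5, e6, hPz]
  simp

lemma complement_of_facet {Q : List B} {π : W} {F : Finset ℕ}
    (hF : IsFacet cs Q π F) :
    cs.IsReduced (complement Q F) ∧ cs.wordProd (complement Q F) = π := by
  classical
  obtain ⟨⟨hsub, L', hL', hred, hprod⟩, hmax⟩ := hF
  rw [complement] at hL'
  obtain ⟨E, hE, rfl⟩ := List.sublist_map_iff.mp hL'
  have hEenum : E <+ (Q.zipIdx.map Prod.swap) := hE.trans filter_sublist
  set F'' : Finset ℕ := (Finset.range Q.length).filter (fun i => i ∉ E.map Prod.fst)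
    with hF''def
  have hnodup : ((Q.zipIdx.map Prod.swap).map Prod.fst).Nodup := by
    rw [zipIdx_swap_map_fst]; exact nodup_range
  have hcomp : complement Q F'' = E.map Prod.snd := by
    rw [complement, ← filter_fst_mem_of_sublist hEenum hnodup]
    congr 1
    refine List.filter_congr fun x hx => ?_
    have hxlen : x.1 < Q.length := by
      have h1 : x.1 ∈ (Q.zipIdx.map Prod.swap).map Prod.fst := mem_map_of_mem (f := Prod.fst) hx
      rw [zipIdx_swap_map_fst, mem_range] at h1; exact h1
    simp [hF''def, Finset.mem_filter, Finset.mem_range, hxlen]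
  have hface : IsFace cs Q π F'' :=
    ⟨Finset.filter_subset _ _, ⟨E.map Prod.snd, by rw [hcomp], hred, hprod⟩⟩
  have hFF : F ⊆ F'' := by
    intro i hi
    simp only [hF''def, Finset.mem_filter, Finset.mem_range]
    refine ⟨by simpa using hsub hi, fun hmem => ?_⟩
    obtain ⟨x, hxE, hx1⟩ := mem_map.mp hmem
    have hxfil := hE.subset hxE
    have hx := of_mem_filter hxfil
    simp only [decide_eq_true_eq] at hx
    exact hx (hx1 ▸ hi)
  have heq : F'' = F := hmax F'' hface hFF
  rw [← heq, hcomp]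
  exact ⟨hred, hprod⟩

/-- behaviour of the root function under a flip. -/
theorem flip_root_function_update (Q : List B) (π : W) (hQ : demazure cs Q = π)
    (F : Finset ℕ) (q q' : ℕ) (hq : q ∈ F) (hq' : q' ∉ F)
    (hqq' : q < q') (hq'len : q' < Q.length)
    (hF : IsFacet cs Q π F) (hF' : IsFacet cs Q π (insert q' (F.erase q)))
    (p : ℕ) (hp : p < Q.length) :
    rootF cs Q (insert q' (F.erase q)) p =
      if q < p ∧ p ≤ q' then
        rootPair cs
          ((prefixProd cs Q F q * cs.simple (Q.getD q default) * (prefixProd cs Q F q)⁻¹) *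
            prefixProd cs Q F p)
          (Q.getD p default)
      else rootF cs Q F p := by
  classical
  have hqlen : q < Q.length := by simpa using hF.1.1 hq
  have hneq : q ≠ q' := Nat.ne_of_lt hqq'
  have hzq : (q, Q.getD q default) ∈ (Q.zipIdx.map Prod.swap) := by
    rw [mem_zipIdx_swap_iff, List.getD_eq_getElem Q default hqlen]
    exact getElem?_eq_getElem hqlen
  have hzq' : (q', Q.getD q' default) ∈ (Q.zipIdx.map Prod.swap) := by
    rw [mem_zipIdx_swap_iff, List.getD_eq_getElem Q default hq'len]
    exact getElem?_eq_getElem hq'len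
  have hsort : (Q.zipIdx.map Prod.swap).Pairwise (fun a b : ℕ × B => a.1 < b.1) :=
    List.pairwise_map.mp (by rw [zipIdx_swap_map_fst]; exact pairwise_lt_range)
  have hmemF' : ∀ i : ℕ, (i ∉ insert q' (F.erase q)) ↔ (i = q ∨ (i ∉ F ∧ i ≠ q')) := by
    intro i
    simp only [Finset.mem_insert, Finset.mem_erase, not_or, not_and]
    constructor
    · rintro ⟨h1, h2⟩
      by_cases hiq : i = q
      · exact Or.inl hiq
      · exact Or.inr ⟨h2 hiq, h1⟩
    · rintro (rfl | ⟨h1, h2⟩)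
      · exact ⟨hneq, fun h => absurd rfl h⟩
      · exact ⟨h2, fun _ => h1⟩
  set Al := (Q.zipIdx.map Prod.swap).filter (fun x => decide (x.1 ∉ F ∧ x.1 < q)) with hAl
  set Ml := (Q.zipIdx.map Prod.swap).filter (fun x => decide (x.1 ∉ F ∧ q < x.1 ∧ x.1 < q')) with hMl
  set Rl := (Q.zipIdx.map Prod.swap).filter (fun x => decide (x.1 ∉ F ∧ q' < x.1)) with hRl
  have hAM : (Q.zipIdx.map Prod.swap).filter (fun x => decide (x.1 ∉ F ∧ x.1 < q')) = Al ++ Ml := by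
    rw [filter_split_not_mem hsort hzq
      (P := fun x => decide (x.1 ∉ F ∧ x.1 < q')) (by simp [hq]), hAl, hMl]
    congr 1
    · refine List.filter_congr fun x hx => ?_
      rw [Bool.eq_iff_iff]
      simp only [Bool.and_eq_true, decide_eq_true_eq]
      constructor
      · rintro ⟨⟨h1, h2⟩, h3⟩; exact ⟨h1, h3⟩
      · rintro ⟨h1, h3⟩; exact ⟨⟨h1, by omega⟩, h3⟩
    · refine List.filter_congr fun x hx => ?_
      rw [Bool.eq_iff_iff]
      simp only [Bool.and_eq_true, decide_eq_true_eq]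
      constructor
      · rintro ⟨⟨h1, h2⟩, h3⟩; exact ⟨h1, h3, h2⟩
      · rintro ⟨h1, h3, h2⟩; exact ⟨⟨h1, h2⟩, h3⟩
  -- decomposition of the complement of F
  have hdF : (Q.zipIdx.map Prod.swap).filter (fun x => decide (x.1 ∉ F)) =
      (Al ++ Ml) ++ (q', Q.getD q' default) :: Rl := by
    have h0 : (Q.zipIdx.map Prod.swap).filter (fun x => decide (x.1 ∉ F)) =
        (Q.zipIdx.map Prod.swap).filter (fun x => decide (x.1 ∉ F ∧ x.1 ≠ q') || decide (x.1 = q')) :=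
      List.filter_congr fun x hx => by
        rw [Bool.eq_iff_iff]
        simp only [Bool.or_eq_true, decide_eq_true_eq]
        constructor
        · intro h1
          by_cases h2 : x.1 = q'
          · exact Or.inr h2
          · exact Or.inl ⟨h1, h2⟩
        · rintro (⟨h1, _⟩ | h2)
          · exact h1
          · exact h2 ▸ hq'
    rw [h0, filter_split_mem hsort hzq' _]
    congr 1
    · rw [← hAM]
      refine List.filter_congr fun x hx => ?_
      rw [Bool.eq_iff_iff]
      simp only [Bool.and_eq_true, decide_eq_true_eq]
      constructor
      · rintro ⟨⟨h1, h2⟩, h3⟩; exact ⟨h1, h3⟩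
      · rintro ⟨h1, h3⟩; exact ⟨⟨h1, by omega⟩, h3⟩
    · congr 1
      rw [hRl]
      refine List.filter_congr fun x hx => ?_
      rw [Bool.eq_iff_iff]
      simp only [Bool.and_eq_true, decide_eq_true_eq]
      constructor
      · rintro ⟨⟨h1, h2⟩, h3⟩; exact ⟨h1, h3⟩
      · rintro ⟨h1, h3⟩; exact ⟨⟨h1, by omega⟩, h3⟩
  -- decomposition of the complement of F'
  have hdF' : (Q.zipIdx.map Prod.swap).filter (fun x => decide (x.1 ∉ insert q' (F.erase q))) =
      Al ++ (q, Q.getD q default) :: (Ml ++ Rl) := by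
    have h0 : (Q.zipIdx.map Prod.swap).filter (fun x => decide (x.1 ∉ insert q' (F.erase q))) =
        (Q.zipIdx.map Prod.swap).filter (fun x => decide (x.1 ∉ F ∧ x.1 ≠ q') || decide (x.1 = q)) :=
      List.filter_congr fun x hx => by
        rw [Bool.eq_iff_iff]
        simp only [Bool.or_eq_true, decide_eq_true_eq, hmemF']
        exact Or.comm
    rw [h0, filter_split_mem hsort hzq _]
    congr 1
    · rw [hAl]
      refine List.filter_congr fun x hx => ?_
      rw [Bool.eq_iff_iff]
      simp only [Bool.and_eq_true, decide_eq_true_eq]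
      constructor
      · rintro ⟨⟨h1, h2⟩, h3⟩; exact ⟨h1, h3⟩
      · rintro ⟨h1, h3⟩; exact ⟨⟨h1, by omega⟩, h3⟩
    · congr 1
      rw [filter_split_not_mem hsort hzq'
        (P := fun x => decide (x.1 ∉ F ∧ x.1 ≠ q') && decide (q < x.1)) (by simp), hMl, hRl]
      congr 1
      · refine List.filter_congr fun x hx => ?_
        rw [Bool.eq_iff_iff]
        simp only [Bool.and_eq_true, decide_eq_true_eq]
        constructor
        · rintro ⟨⟨⟨h1, h2⟩, h3⟩, h4⟩; exact ⟨h1, h3, h4⟩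
        · rintro ⟨h1, h3, h4⟩; exact ⟨⟨⟨h1, by omega⟩, h3⟩, h4⟩
      · refine List.filter_congr fun x hx => ?_
        rw [Bool.eq_iff_iff]
        simp only [Bool.and_eq_true, decide_eq_true_eq]
        constructor
        · rintro ⟨⟨⟨h1, h2⟩, h3⟩, h4⟩; exact ⟨h1, h4⟩
        · rintro ⟨h1, h4⟩; exact ⟨⟨⟨h1, by omega⟩, by omega⟩, h4⟩
  -- products of words of the two complements
  have hwF : cs.wordProd (Al.map Prod.snd) * cs.wordProd (Ml.map Prod.snd) *
      (cs.simple (Q.getD q' default) * cs.wordProd (Rl.map Prod.snd)) = π := by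
    have h := (complement_of_facet cs hF).2
    rw [complement, hdF, map_append, map_append, map_cons, cs.wordProd_append,
      cs.wordProd_append, cs.wordProd_cons] at h
    exact h
  have hwF' : cs.wordProd (Al.map Prod.snd) *
      (cs.simple (Q.getD q default) *
        (cs.wordProd (Ml.map Prod.snd) * cs.wordProd (Rl.map Prod.snd))) = π := by
    have h := (complement_of_facet cs hF').2
    rw [complement, hdF', map_append, map_cons, map_append, cs.wordProd_append,
      cs.wordProd_cons, cs.wordProd_append] at h
    exact h
  -- the key relation
  have keyrel : cs.simple (Q.getD q default) * cs.wordProd (Ml.map Prod.snd) =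
      cs.wordProd (Ml.map Prod.snd) * cs.simple (Q.getD q' default) := by
    have hL : cs.wordProd (Al.map Prod.snd) *
        ((cs.wordProd (Ml.map Prod.snd) * cs.simple (Q.getD q' default)) *
          cs.wordProd (Rl.map Prod.snd)) = π := by
      rw [← hwF]; group
    have hR : cs.wordProd (Al.map Prod.snd) *
        ((cs.simple (Q.getD q default) * cs.wordProd (Ml.map Prod.snd)) *
          cs.wordProd (Rl.map Prod.snd)) = π := by
      rw [← hwF']; group
    have h3 := hL.trans hR.symm
    have h4 := mul_left_cancel h3
    exact (mul_right_cancel h4).symm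
  have keyrel' : ∀ r : W,
      cs.simple (Q.getD q default) * (cs.wordProd (Ml.map Prod.snd) * r) =
        cs.wordProd (Ml.map Prod.snd) * (cs.simple (Q.getD q' default) * r) := fun r => by
    rw [← mul_assoc, keyrel, mul_assoc]
  by_cases hcase : q < p ∧ p ≤ q'
  · rw [if_pos hcase]
    obtain ⟨hqp, hpq'⟩ := hcase
    simp only [rootF]
    congr 1
    simp only [prefixProd]
    have h0 : (Q.zipIdx.map Prod.swap).filter (fun x => decide (x.1 ∉ insert q' (F.erase q) ∧ x.1 < p)) =
        (Q.zipIdx.map Prod.swap).filter (fun x => decide (x.1 ∉ F ∧ x.1 < p) || decide (x.1 = q)) :=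
      List.filter_congr fun x hx => by
        rw [Bool.eq_iff_iff]
        simp only [Bool.or_eq_true, decide_eq_true_eq, hmemF']
        constructor
        · rintro ⟨(h1 | ⟨h1, h2⟩), h3⟩
          · exact Or.inr h1
          · exact Or.inl ⟨h1, h3⟩
        · rintro (⟨h1, h3⟩ | h1)
          · exact ⟨Or.inr ⟨h1, by omega⟩, h3⟩
          · exact ⟨Or.inl h1, by omega⟩
    have e2 : (Q.zipIdx.map Prod.swap).filter (fun x => decide (x.1 ∉ F ∧ x.1 < p)) =
        (Q.zipIdx.map Prod.swap).filter (fun x => decide (x.1 ∉ F ∧ x.1 < p) && decide (x.1 < q)) ++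
        (Q.zipIdx.map Prod.swap).filter (fun x => decide (x.1 ∉ F ∧ x.1 < p) && decide (q < x.1)) :=
      filter_split_not_mem hsort hzq (by simp [hq])
    have e1 : (Q.zipIdx.map Prod.swap).filter (fun x => decide (x.1 ∉ F ∧ x.1 < p) && decide (x.1 < q)) =
        (Q.zipIdx.map Prod.swap).filter (fun x => decide (x.1 ∉ F ∧ x.1 < q)) :=
      List.filter_congr fun x hx => by
        rw [Bool.eq_iff_iff]
        simp only [Bool.and_eq_true, decide_eq_true_eq]
        constructor
        · rintro ⟨⟨h1, h2⟩, h3⟩; exact ⟨h1, h3⟩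
        · rintro ⟨h1, h3⟩; exact ⟨⟨h1, by omega⟩, h3⟩
    rw [h0, filter_split_mem hsort hzq _, e2, e1]
    simp only [map_append, map_cons, cs.wordProd_append, cs.wordProd_cons]
    group
  · rw [if_neg hcase]
    have htri : p ≤ q ∨ q' < p := by omega
    rcases htri with hple | hq'p
    · -- p ≤ q : prefix products coincide
      have hpre : prefixProd cs Q (insert q' (F.erase q)) p = prefixProd cs Q F p := by
        simp only [prefixProd]
        refine congrArg cs.wordProd (congrArg (map Prod.snd) (List.filter_congr fun x hx => ?_))
        rw [Bool.eq_iff_iff]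
        simp only [decide_eq_true_eq, hmemF']
        constructor
        · rintro ⟨(h1 | ⟨h1, h2⟩), h3⟩
          · exact absurd h3 (by omega)
          · exact ⟨h1, h3⟩
        · rintro ⟨h1, h3⟩
          exact ⟨Or.inr ⟨h1, by omega⟩, h3⟩
      simp only [rootF, hpre]
    · -- q' < p : prefix products equal as group elements
      have hqp : q < p := by omega
      have dF : (Q.zipIdx.map Prod.swap).filter (fun x => decide (x.1 ∉ F ∧ x.1 < p)) =
          (Al ++ Ml) ++ (q', Q.getD q' default) ::
            (Q.zipIdx.map Prod.swap).filter (fun x => decide (x.1 ∉ F ∧ x.1 < p ∧ x.1 ≠ q') &&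
              decide (q' < x.1)) := by
        have h0 : (Q.zipIdx.map Prod.swap).filter (fun x => decide (x.1 ∉ F ∧ x.1 < p)) =
            (Q.zipIdx.map Prod.swap).filter (fun x => decide (x.1 ∉ F ∧ x.1 < p ∧ x.1 ≠ q') ||
              decide (x.1 = q')) :=
          List.filter_congr fun x hx => by
            rw [Bool.eq_iff_iff]
            simp only [Bool.or_eq_true, decide_eq_true_eq]
            constructor
            · rintro ⟨h1, h3⟩
              by_cases h2 : x.1 = q'
              · exact Or.inr h2
              · exact Or.inl ⟨h1, h3, h2⟩
            · rintro (⟨h1, h3, h2⟩ | h2)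
              · exact ⟨h1, h3⟩
              · exact ⟨h2 ▸ hq', by omega⟩
        rw [h0, filter_split_mem hsort hzq' _]
        congr 2
        rw [← hAM]
        refine List.filter_congr fun x hx => ?_
        rw [Bool.eq_iff_iff]
        simp only [Bool.and_eq_true, decide_eq_true_eq]
        constructor
        · rintro ⟨⟨h1, h2, h3⟩, h4⟩; exact ⟨h1, h4⟩
        · rintro ⟨h1, h4⟩; exact ⟨⟨h1, by omega, by omega⟩, h4⟩
      have dF' : (Q.zipIdx.map Prod.swap).filter
            (fun x => decide (x.1 ∉ insert q' (F.erase q) ∧ x.1 < p)) =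
          Al ++ (q, Q.getD q default) ::
            (Ml ++ (Q.zipIdx.map Prod.swap).filter (fun x => decide (x.1 ∉ F ∧ x.1 < p ∧ x.1 ≠ q') &&
              decide (q' < x.1))) := by
        have h0 : (Q.zipIdx.map Prod.swap).filter (fun x => decide (x.1 ∉ insert q' (F.erase q) ∧ x.1 < p)) =
            (Q.zipIdx.map Prod.swap).filter (fun x => decide (x.1 ∉ F ∧ x.1 < p ∧ x.1 ≠ q') ||
              decide (x.1 = q)) :=
          List.filter_congr fun x hx => by
            rw [Bool.eq_iff_iff]
            simp only [Bool.or_eq_true, decide_eq_true_eq, hmemF']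
            constructor
            · rintro ⟨(h1 | ⟨h1, h2⟩), h3⟩
              · exact Or.inr h1
              · exact Or.inl ⟨h1, h3, h2⟩
            · rintro (⟨h1, h3, h2⟩ | h1)
              · exact ⟨Or.inr ⟨h1, h2⟩, h3⟩
              · exact ⟨Or.inl h1, by omega⟩
        rw [h0, filter_split_mem hsort hzq _]
        congr 1
        · rw [hAl]
          refine List.filter_congr fun x hx => ?_
          rw [Bool.eq_iff_iff]
          simp only [Bool.and_eq_true, decide_eq_true_eq]
          constructor
          · rintro ⟨⟨h1, h2, h3⟩, h4⟩; exact ⟨h1, h4⟩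
          · rintro ⟨h1, h4⟩; exact ⟨⟨h1, by omega, by omega⟩, h4⟩
        · congr 1
          rw [filter_split_not_mem hsort hzq'
            (P := fun x => decide (x.1 ∉ F ∧ x.1 < p ∧ x.1 ≠ q') && decide (q < x.1))
            (by simp), hMl]
          congr 1
          · refine List.filter_congr fun x hx => ?_
            rw [Bool.eq_iff_iff]
            simp only [Bool.and_eq_true, decide_eq_true_eq]
            constructor
            · rintro ⟨⟨⟨h1, h2, h3⟩, h4⟩, h5⟩; exact ⟨h1, h4, h5⟩
            · rintro ⟨h1, h4, h5⟩; exact ⟨⟨⟨h1, by omega, by omega⟩, h4⟩, h5⟩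
          · refine List.filter_congr fun x hx => ?_
            rw [Bool.eq_iff_iff]
            simp only [Bool.and_eq_true, decide_eq_true_eq]
            constructor
            · rintro ⟨⟨⟨h1, h2, h3⟩, h4⟩, h5⟩; exact ⟨⟨h1, h2, h3⟩, h5⟩
            · rintro ⟨⟨h1, h2, h3⟩, h5⟩; exact ⟨⟨⟨h1, h2, h3⟩, by omega⟩, h5⟩
      have hpre : prefixProd cs Q (insert q' (F.erase q)) p = prefixProd cs Q F p := by
        simp only [prefixProd]
        rw [dF, dF']
        simp only [map_append, map_cons, cs.wordProd_append, cs.wordProd_cons]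
        rw [keyrel']
        group
      simp only [rootF, hpre]


end SubwordComplex
end

section
/- Let (W,S) be a finite Coxeter system and c a Coxeter element with reduced word c = (c₁,…,c_n). In the subword complex Δ(c·w₀(c), w₀), if a facet F contains the position of the letter c_i (in the prefix c), then for every other position q ∈ F, the root r_F(q) lies in the parabolic root subsystem Φ_{⟨c_i⟩} spanned by the simple roots α_s with s ≠ c_i. -/
open List

namespace SubwordComplex

variable {B : Type*} [DecidableEq B] [Inhabited B] {W : Type*} [Group W]
variable {M : CoxeterMatrix B} (cs : CoxeterSystem M W)

local prefix:100 "s" => cs.simple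
local prefix:100 "π" => cs.wordProd
noncomputable local instance : DecidableEq W := Classical.decEq W

/-- The Tits involution on `W × ZMod 2` attached to a simple generator. -/
noncomputable def invPerm (i : B) : Equiv.Perm (W × ZMod 2) :=
  Function.Involutive.toPerm
    (fun p => (s i * p.1 * s i, p.2 + if p.1 = s i then 1 else 0))
    (by
      intro p
      have h1 : s i * (s i * p.1 * s i) * s i = p.1 := by
        group
        simp [cs.simple_sq]
      have h2 : (s i * p.1 * s i = s i) ↔ (p.1 = s i) := by
        constructor
        · intro h
          have := congrArg (fun x => s i * x * s i) h
          simpa [h1, cs.simple_mul_simple_self, mul_assoc] using this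
        · intro h
          rw [h]
          exact cs.simple_mul_simple_cancel_right (w := cs.simple i) i
      ext
      · exact h1
      · simp only [h2]
        rcases Classical.em (p.1 = s i) with h | h <;> simp [h]
        · rw [add_assoc]
          have : (1 + 1 : ZMod 2) = 0 := by decide
          rw [this, add_zero]
          )

theorem invPerm_apply (i : B) (p : W × ZMod 2) :
    invPerm cs i p = (s i * p.1 * s i, p.2 + if p.1 = s i then 1 else 0) := rfl

/-- Applying a product of Tits involutions along a word: the sign shift is
the number of occurrences in the right inversion sequence. -/
theorem prod_invPerm_apply (ω : List B) (t : W) (ε : ZMod 2) :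
    (ω.map (invPerm cs)).prod (t, ε) =
      (π ω * t * (π ω)⁻¹, ε + ((cs.rightInvSeq ω).count t : ZMod 2)) := by
  induction ω generalizing ε with
  | nil => simp
  | cons i ω ih =>
    rw [map_cons, prod_cons, Equiv.Perm.mul_apply, ih, invPerm_apply]
    have hcons : cs.rightInvSeq (i :: ω) = ((π ω)⁻¹ * s i * π ω) :: cs.rightInvSeq ω := rfl
    rw [hcons]
    ext
    · simp [cs.wordProd_cons, mul_assoc]
    · rw [count_cons]
      push_cast
      simp only [beq_iff_eq]
      by_cases h : ((π ω)⁻¹ * s i * π ω) = t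
      · rw [if_pos h, if_pos (show π ω * t * (π ω)⁻¹ = s i by rw [← h]; group)]
        ring
      · rw [if_neg h, if_neg
          (show ¬(π ω * t * (π ω)⁻¹ = s i) from fun hh => h (by rw [← hh]; group))]
        ring



theorem sj_conj_pow (i j : B) (v : ℕ) :
    s j * (s i * s j) ^ v * s j = ((s i * s j) ^ v)⁻¹ := by
  have h0 : ∀ x : W, s j * x * s j = (MulAut.conj (s j)) x := by
    intro x
    rw [MulAut.conj_apply, cs.inv_simple]
  have h2 : s j * (s i * s j) * s j = (s i * s j)⁻¹ := by
    have h3 : s j * (s i * s j) * s j = s j * s i * (s j * s j) := by group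
    rw [h3, cs.simple_mul_simple_self, mul_one, mul_inv_rev, cs.inv_simple, cs.inv_simple]
  have h1 : (MulAut.conj (s j)) (s i * s j) = (s i * s j)⁻¹ := by
    rw [MulAut.conj_apply, cs.inv_simple]
    exact h2
  rw [h0, map_pow, h1, inv_pow]

theorem pow_mul_sj (i j : B) (v : ℕ) :
    ((s i * s j) ^ v)⁻¹ * s j = s j * (s i * s j) ^ v := by
  have h := sj_conj_pow cs i j v
  calc ((s i * s j) ^ v)⁻¹ * s j = (s j * (s i * s j) ^ v * s j) * s j := by rw [h]
  _ = s j * (s i * s j) ^ v * (s j * s j) := by group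
  _ = s j * (s i * s j) ^ v := by rw [cs.simple_mul_simple_self, mul_one]

/-- Right inversion sequence of an alternating word: explicit formula. -/
theorem rightInvSeq_alternatingWord (i j : B) (L : ℕ) :
    cs.rightInvSeq (CoxeterSystem.alternatingWord i j L)
      = (List.range L).map (fun k => s j * (s i * s j) ^ (L - 1 - k)) := by
  induction L with
  | zero => simp [CoxeterSystem.alternatingWord]
  | succ L ih =>
    rw [CoxeterSystem.alternatingWord_succ' i j L]
    have hcons : cs.rightInvSeq ((if Even L then j else i) :: CoxeterSystem.alternatingWord i j L)
        = ((π (CoxeterSystem.alternatingWord i j L))⁻¹ * s (if Even L then j else i)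
            * π (CoxeterSystem.alternatingWord i j L))
          :: cs.rightInvSeq (CoxeterSystem.alternatingWord i j L) := rfl
    rw [hcons, ih, range_succ_eq_map, map_cons, map_map]
    congr 1
    · -- head computation
      have hL0 : L + 1 - 1 - 0 = L := by omega
      rw [hL0, CoxeterSystem.prod_alternatingWord_eq_mul_pow]
      rcases Nat.even_or_odd L with hL | hL
      · obtain ⟨u, hu⟩ := hL
        have heL : Even L := ⟨u, hu⟩
        rw [if_pos heL, if_pos heL, one_mul]
        have h2 : L / 2 = u := by omega
        rw [h2, pow_mul_sj cs i j u, mul_assoc, ← pow_add]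
        congr 2
        omega
      · have hne : ¬ Even L := Nat.not_even_iff_odd.mpr hL
        obtain ⟨u, hu⟩ := hL
        rw [if_neg hne, if_neg hne]
        have h2 : L / 2 = u := by omega
        rw [h2, mul_inv_rev, cs.inv_simple]
        rw [pow_mul_sj cs i j u]
        have hstep : s j * (s i * s j) ^ u * s i * (s j * (s i * s j) ^ u)
            = s j * ((s i * s j) ^ u * (s i * s j) * (s i * s j) ^ u) := by group
        rw [hstep, ← pow_succ, ← pow_add]
        congr 2
        omega
    · apply map_congr_left
      intro k hk
      simp only [Function.comp_apply]
      congr 2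
      omega

theorem flatten_replicate_pair (i j : B) (m : ℕ) :
    (List.replicate m ([i, j])).flatten = CoxeterSystem.alternatingWord i j (2 * m) := by
  induction m with
  | zero => simp [CoxeterSystem.alternatingWord]
  | succ m ih =>
    have h2 : 2 * (m + 1) = (2 * m + 1) + 1 := by omega
    rw [h2, CoxeterSystem.alternatingWord_succ' i j, CoxeterSystem.alternatingWord_succ' i j]
    rw [if_neg (by simp [parity_simps]), if_pos (by simp [parity_simps])]
    rw [replicate_succ, flatten_cons, ih]
    rfl

theorem count_ris_relation_even (i j : B) (t : W) :
    (List.count t (cs.rightInvSeq (CoxeterSystem.alternatingWord i j (2 * (M i j)))) : ZMod 2)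
      = 0 := by
  rw [rightInvSeq_alternatingWord]
  have hsplit : List.range (2 * M i j) = List.range (M i j)
      ++ (List.range (M i j)).map (fun x => M i j + x) := by
    rw [← List.range_add]
    congr 1
    omega
  rw [hsplit, map_append, count_append, map_map]
  have heq : ((List.range (M i j)).map ((fun k => s j * (s i * s j) ^ (2 * M i j - 1 - k))
        ∘ (fun x => M i j + x)))
      = (List.range (M i j)).map (fun k => s j * (s i * s j) ^ (2 * M i j - 1 - k)) := by
    apply map_congr_left
    intro k hk
    rw [mem_range] at hk
    simp only [Function.comp_apply]
    congr 1
    have h1 : 2 * M i j - 1 - (M i j + k) = M i j - 1 - k := by omega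
    have h2 : 2 * M i j - 1 - k = (M i j - 1 - k) + M i j := by omega
    rw [h1, h2, pow_add, cs.simple_mul_simple_pow i j, mul_one]
  rw [heq]
  push_cast
  rw [← two_mul]
  have h20 : (2 : ZMod 2) = 0 := rfl
  rw [h20, zero_mul]

theorem invPerm_liftable : M.IsLiftable (invPerm cs) := by
  intro i j
  have hword : ∀ n : ℕ, ((List.replicate n ([i, j])).flatten.map (invPerm cs)).prod
      = (invPerm cs i * invPerm cs j) ^ n := by
    intro n
    induction n with
    | zero => simp
    | succ n ih =>
      rw [replicate_succ, flatten_cons, map_append, prod_append, ih, pow_succ']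
      simp [mul_assoc]
  rw [← hword, flatten_replicate_pair i j (M i j)]
  apply Equiv.ext
  rintro ⟨t, ε⟩
  rw [prod_invPerm_apply cs _ t ε]
  have h1 : π (CoxeterSystem.alternatingWord i j (2 * M i j)) = 1 := by
    rw [CoxeterSystem.prod_alternatingWord_eq_mul_pow]
    rw [if_pos (by simp [parity_simps]), one_mul]
    have : 2 * M i j / 2 = M i j := by omega
    rw [this, cs.simple_mul_simple_pow i j]
  rw [h1, count_ris_relation_even cs i j t]
  simp

/-- Parity of the number of occurrences of `t` in the right inversion sequence
depends only on the product of the word. -/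
theorem count_ris_parity (ω ω' : List B) (h : π ω = π ω') (t : W) :
    ((cs.rightInvSeq ω).count t : ZMod 2) = ((cs.rightInvSeq ω').count t : ZMod 2) := by
  have key : ∀ ω'' : List B, (cs.lift ⟨invPerm cs, invPerm_liftable cs⟩) (π ω'')
      = (ω''.map (invPerm cs)).prod := by
    intro ω''
    rw [CoxeterSystem.wordProd, MonoidHom.map_list_prod, List.map_map]
    congr 1
    apply map_congr_left
    intro b _
    simp only [Function.comp_apply]
    exact cs.lift_apply_simple (invPerm_liftable cs) b
  have h2 : (ω.map (invPerm cs)).prod = (ω'.map (invPerm cs)).prod := by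
    rw [← key, ← key, h]
  have h3 := congrArg (fun f => f (t, (0 : ZMod 2))) h2
  simp only [prod_invPerm_apply cs ω t 0, prod_invPerm_apply cs ω' t 0] at h3
  have h4 := congrArg Prod.snd h3
  simpa using h4

theorem count_lis_parity (ω ω' : List B) (h : π ω = π ω') (t : W) :
    ((cs.leftInvSeq ω).count t : ZMod 2) = ((cs.leftInvSeq ω').count t : ZMod 2) := by
  have h1 : π ω.reverse = π ω'.reverse := by
    rw [cs.wordProd_reverse, cs.wordProd_reverse, h]
  have h2 := count_ris_parity cs ω.reverse ω'.reverse h1 t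
  rwa [cs.rightInvSeq_reverse, cs.rightInvSeq_reverse, List.count_reverse,
    List.count_reverse] at h2

/-- If `t` is not a left inversion of `π ω`, then `t` occurs an even number of
times in the left inversion sequence of `ω`. -/
theorem count_lis_even_of_not_inversion (ω : List B) (t : W)
    (h : ¬ cs.IsLeftInversion (π ω) t) :
    ((cs.leftInvSeq ω).count t : ZMod 2) = 0 := by
  obtain ⟨ω', hred, hw⟩ := cs.exists_reduced_word' (π ω)
  rw [count_lis_parity cs ω ω' hw t]
  have : t ∉ cs.leftInvSeq ω' := by
    intro hmem
    exact h (hw ▸ cs.isLeftInversion_of_mem_leftInvSeq hred hmem)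
  rw [List.count_eq_zero_of_not_mem this]
  simp

/-- The word of letters of `Q` at positions satisfying `P`. -/
def letters (Q : List B) (P : ℕ → Prop) [DecidablePred P] : List B :=
  ((List.range Q.length).filter (fun p => P p)).map (fun p => Q.getD p default)

theorem enum_filter_map (Q : List B) (P : ℕ → Prop) [DecidablePred P] :
    ((Q.zipIdx.map Prod.swap).filter (fun p => P p.1)).map Prod.snd = letters Q P := by
  induction Q using List.reverseRecOn with
  | nil => simp [letters]
  | append_singleton Q a ih =>
    have henum : (Q ++ [a]).zipIdx.map Prod.swap = Q.zipIdx.map Prod.swap ++ [(Q.length, a)] := by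
      simp [List.zipIdx_append]
    rw [henum, filter_append, map_append, ih]
    unfold letters
    rw [length_append, length_singleton, range_succ, filter_append, map_append]
    congr 1
    · apply map_congr_left
      intro p hp
      rw [mem_filter, mem_range] at hp
      exact (List.getD_append Q [a] default p hp.1).symm
    · by_cases hP : P Q.length
      · simp only [filter_cons, filter_nil]
        rw [if_pos (by simpa using hP), if_pos (by simpa using hP)]
        simp only [map_cons, map_nil]
        congr 1
        rw [List.getD_append_right Q [a] default Q.length (le_refl _)]
        simp
      · simp only [filter_cons, filter_nil]
        rw [if_neg (by simpa using hP), if_neg (by simpa using hP)]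
        simp

theorem complement_eq_letters (Q : List B) (F : Finset ℕ) :
    complement Q F = letters Q (fun p => p ∉ F) :=
  enum_filter_map Q (fun p => p ∉ F)

theorem prefixProd_eq_letters (Q : List B) (F : Finset ℕ) (q : ℕ) :
    prefixProd cs Q F q = π (letters Q (fun p => p ∉ F ∧ p < q)) := by
  rw [prefixProd]
  congr 1
  exact enum_filter_map Q (fun p => p ∉ F ∧ p < q)

theorem letters_congr {Q : List B} {P R : ℕ → Prop} [DecidablePred P] [DecidablePred R]
    (h : ∀ p < Q.length, (P p ↔ R p)) : letters Q P = letters Q R := by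
  unfold letters
  congr 1
  apply filter_congr
  intro p hp
  rw [mem_range] at hp
  simp only [decide_eq_decide]
  exact h p hp

theorem filter_range_succ (R : ℕ → Prop) [DecidablePred R] (N : ℕ) :
    (List.range (N+1)).filter (fun p => R p)
      = (List.range N).filter (fun p => R p) ++ if R N then [N] else [] := by
  rw [range_succ, filter_append]
  congr 1
  by_cases h : R N <;> simp [h]

/-- Splitting a filtered range at an element satisfying the predicate. -/
theorem filter_range_split_mem (P : ℕ → Prop) [DecidablePred P] (q : ℕ) (hPq : P q) :
    ∀ N, q < N →
      (List.range N).filter (fun p => P p)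
        = (List.range N).filter (fun p => P p ∧ p < q)
          ++ q :: (List.range N).filter (fun p => P p ∧ q < p) := by
  intro N
  induction N with
  | zero => omega
  | succ N ih =>
    intro hq
    rw [filter_range_succ, filter_range_succ (fun p => P p ∧ p < q),
      filter_range_succ (fun p => P p ∧ q < p)]
    by_cases hqN : q < N
    · rw [ih hqN]
      by_cases hPN : P N
      · rw [if_pos hPN, if_neg (fun hh => absurd hh.2 (by omega)), if_pos ⟨hPN, hqN⟩]
        simp [append_assoc]
      · rw [if_neg hPN, if_neg (fun hh => hPN hh.1), if_neg (fun hh => hPN hh.1)]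
        simp [append_assoc]
    · have hqN' : q = N := by omega
      subst hqN'
      rw [if_pos hPq]
      simp only [lt_irrefl, and_false, if_false]
      have h1 : (List.range q).filter (fun p => P p ∧ p < q)
          = (List.range q).filter (fun p => P p) := by
        apply filter_congr
        intro p hp
        rw [mem_range] at hp
        simp [hp]
      have h2 : (List.range q).filter (fun p => P p ∧ q < p) = [] := by
        rw [filter_eq_nil_iff]
        intro p hp
        rw [mem_range] at hp
        simp
        omega
      rw [h1, h2]
      simp

/-- Splitting a filtered range at an element not satisfying the predicate. -/
theorem filter_range_split_not (P : ℕ → Prop) [DecidablePred P] (q : ℕ) (hPq : ¬ P q) (N : ℕ) :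
    (List.range N).filter (fun p => P p)
      = (List.range N).filter (fun p => P p ∧ p < q)
        ++ (List.range N).filter (fun p => P p ∧ q < p) := by
  induction N with
  | zero => simp
  | succ N ih =>
    rw [filter_range_succ, filter_range_succ (fun p => P p ∧ p < q),
      filter_range_succ (fun p => P p ∧ q < p), ih]
    rcases lt_trichotomy N q with h | h | h
    · have h2 : (List.range N).filter (fun p => P p ∧ q < p) = [] := by
        rw [filter_eq_nil_iff]
        intro p hp
        rw [mem_range] at hp
        simp
        omega
      rw [h2]
      by_cases hPN : P N
      · rw [if_pos hPN, if_pos ⟨hPN, h⟩, if_neg (fun hh => absurd hh.2 (by omega))]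
        simp
      · rw [if_neg hPN, if_neg (fun hh => hPN hh.1), if_neg (fun hh => hPN hh.1)]
        simp
    · subst h
      rw [if_neg hPq]
      simp only [lt_irrefl, and_false, if_false]
      simp [append_assoc]
    · by_cases hPN : P N
      · rw [if_pos hPN, if_neg (fun hh => absurd hh.2 (by omega)), if_pos ⟨hPN, h⟩]
        simp [append_assoc]
      · rw [if_neg hPN, if_neg (fun hh => hPN hh.1), if_neg (fun hh => hPN hh.1)]
        simp [append_assoc]

/-- Splitting the letters at a position satisfying `P`. -/
theorem letters_split_mem (Q : List B) (P : ℕ → Prop) [DecidablePred P] (q : ℕ)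
    (hPq : P q) (hq : q < Q.length) :
    letters Q P = letters Q (fun p => P p ∧ p < q)
      ++ Q.getD q default :: letters Q (fun p => P p ∧ q < p) := by
  unfold letters
  rw [filter_range_split_mem P q hPq Q.length hq, map_append, map_cons]

theorem letters_split_not (Q : List B) (P : ℕ → Prop) [DecidablePred P] (q : ℕ)
    (hPq : ¬ P q) :
    letters Q P = letters Q (fun p => P p ∧ p < q)
      ++ letters Q (fun p => P p ∧ q < p) := by
  unfold letters
  rw [filter_range_split_not P q hPq Q.length, map_append]

theorem length_complement (Q : List B) (F : Finset ℕ) (hF : F ⊆ Finset.range Q.length) :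
    (complement Q F).length = Q.length - F.card := by
  rw [complement_eq_letters]
  unfold letters
  rw [length_map]
  have hsplit := List.length_eq_length_filter_add (l := List.range Q.length)
    (fun p => decide (p ∈ F))
  rw [length_range] at hsplit
  have hmem : ((List.range Q.length).filter (fun p => decide (p ∈ F))).length = F.card := by
    have hnd : ((List.range Q.length).filter (fun p => decide (p ∈ F))).Nodup :=
      List.nodup_range.filter _
    rw [← List.toFinset_card_of_nodup hnd, List.toFinset_filter]
    have hrf : (List.range Q.length).toFinset = Finset.range Q.length := by
      ext x
      simp
    rw [hrf]
    have : Finset.filter (fun x => decide (x ∈ F) = true) (Finset.range Q.length)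
        = Finset.filter (fun x => x ∈ F) (Finset.range Q.length) := by
      apply Finset.filter_congr
      intro x _
      simp
    rw [this, Finset.filter_mem_eq_inter, Finset.inter_eq_right.mpr hF]
  have hne : (List.filter (fun p => !decide (p ∈ F)) (List.range Q.length))
      = (List.range Q.length).filter (fun p => decide (p ∉ F)) := by
    apply filter_congr
    intro x _
    simp
  beta_reduce
  rw [← hne]
  omega


/-! ### Sublist and eraseIdx helpers -/

theorem sublist_eraseIdx_exists {α : Type*} {l' l : List α} (h : l'.Sublist l)
    (hlen : l'.length < l.length) : ∃ j < l.length, l'.Sublist (l.eraseIdx j) := by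
  induction h with
  | slnil => simp at hlen
  | @cons l₁ l₂ a h ih =>
    exact ⟨0, by simp, by simpa using h⟩
  | @cons_cons l₁ l₂ a h ih =>
    have : l₁.length < l₂.length := by simpa using hlen
    obtain ⟨j, hj, hsub⟩ := ih this
    exact ⟨j + 1, by simpa using hj, by rw [List.eraseIdx_cons_succ]; exact hsub.cons₂ a⟩

theorem map_eraseIdx' {α β : Type*} (f : α → β) :
    ∀ (l : List α) (j : ℕ), (l.map f).eraseIdx j = (l.eraseIdx j).map f := by
  intro l
  induction l with
  | nil => intro j; simp
  | cons a l ih =>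
    intro j
    cases j with
    | zero => simp
    | succ j => simp [ih j]

theorem nodup_eraseIdx_eq_filter : ∀ (l : List ℕ), l.Nodup → ∀ j, j < l.length →
    l.eraseIdx j = l.filter (fun x => x ≠ l.getD j 0) := by
  intro l
  induction l with
  | nil => intro _ j hj; simp at hj
  | cons a l ih =>
    intro hnd j hj
    rcases List.nodup_cons.mp hnd with ⟨ha, hl⟩
    cases j with
    | zero =>
      rw [List.eraseIdx_cons_zero]
      have h1 : (a :: l).getD 0 0 = a := rfl
      rw [h1, List.filter_cons, if_neg (by simp)]
      symm
      rw [List.filter_eq_self]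
      intro x hx
      simp only [decide_eq_true_eq]
      intro hxa
      exact ha (hxa ▸ hx)
    | succ j =>
      rw [List.eraseIdx_cons_succ]
      have h1 : (a :: l).getD (j+1) 0 = l.getD j 0 := rfl
      have hjl : j < l.length := by simpa using hj
      rw [h1, List.filter_cons, if_pos]
      · rw [ih hl j hjl]
      · simp only [decide_eq_true_eq]
        intro haj
        have : l.getD j 0 ∈ l := by
          rw [List.getD_eq_getElem l 0 hjl]
          exact List.getElem_mem hjl
        exact ha (haj ▸ this)

theorem eraseIdx_filter_range (P : ℕ → Prop) [DecidablePred P] (N j : ℕ)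
    (hj : j < ((List.range N).filter (fun p => P p)).length) :
    ∃ q, P q ∧ q < N ∧ ((List.range N).filter (fun p => P p)).eraseIdx j
      = (List.range N).filter (fun p => P p ∧ p ≠ q) := by
  set pl := (List.range N).filter (fun p => P p) with hpl
  set q := pl.getD j 0 with hq
  clear_value q
  have hmem : q ∈ pl := by
    rw [hq, List.getD_eq_getElem pl 0 hj]
    exact List.getElem_mem hj
  have hPq : P q ∧ q < N := by
    have := List.mem_filter.mp hmem
    refine ⟨by simpa using this.2, by simpa using List.mem_range.mp this.1⟩
  refine ⟨q, hPq.1, hPq.2, ?_⟩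
  have hnd : pl.Nodup := List.nodup_range.filter _
  rw [nodup_eraseIdx_eq_filter pl hnd j hj, ← hq, hpl, List.filter_filter]
  apply List.filter_congr
  intro x _
  rcases Classical.em (P x) with h | h <;> rcases Classical.em (x = q) with h2 | h2 <;>
    simp [h, h2]

/-! ### Basic facts about faces and facets -/

theorem complement_sublist (Q : List B) {F G : Finset ℕ} (h : G ⊆ F) :
    (complement Q F).Sublist (complement Q G) := by
  rw [complement_eq_letters, complement_eq_letters]
  apply List.Sublist.map
  apply List.monotone_filter_right
  intro p hp
  simp only [decide_eq_true_eq] at *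
  exact fun hpG => hp (h hpG)

theorem isFace_subset {Q : List B} {w : W} {F G : Finset ℕ}
    (hF : IsFace cs Q w F) (hG : G ⊆ F) : IsFace cs Q w G := by
  obtain ⟨hsub, L', hL', hred, hprod⟩ := hF
  exact ⟨fun x hx => hsub (hG hx), L', hL'.trans (complement_sublist Q hG), hred, hprod⟩

theorem insert_complement {Q : List B} {F : Finset ℕ} {q : ℕ} (hq : q ∉ F) :
    complement Q (insert q F) = letters Q (fun p => p ∉ F ∧ p ≠ q) := by
  rw [complement_eq_letters]
  apply letters_congr
  intro p _
  simp only [Finset.mem_insert]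
  constructor
  · intro h; exact ⟨fun h2 => h (Or.inr h2), fun h2 => h (Or.inl h2)⟩
  · rintro ⟨h1, h2⟩ (h3 | h3)
    · exact h2 h3
    · exact h1 h3

/-- Key step: a facet's complement is itself a reduced word for the target. -/
theorem facet_complement_reduced {Q : List B} {w : W} {F : Finset ℕ}
    (h : IsFacet cs Q w F) :
    cs.IsReduced (complement Q F) ∧ π (complement Q F) = w := by
  obtain ⟨⟨hsub, L', hL', hred, hprod⟩, hmax⟩ := h
  have hlen : L'.length = (complement Q F).length := by
    by_contra hne
    have hlt : L'.length < (complement Q F).length :=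
      lt_of_le_of_ne hL'.length_le hne
    obtain ⟨j, hj, hsubl⟩ := sublist_eraseIdx_exists hL' hlt
    rw [complement_eq_letters] at hsubl hj
    unfold letters at hsubl hj
    rw [List.length_map] at hj
    rw [map_eraseIdx'] at hsubl
    obtain ⟨q, hPq, hqN, herase⟩ := eraseIdx_filter_range _ _ j hj
    rw [herase] at hsubl
    have hface : IsFace cs Q w (insert q F) := by
      constructor
      · intro x hx
        rcases Finset.mem_insert.mp hx with rfl | hx
        · exact Finset.mem_range.mpr hqN
        · exact hsub hx
      · refine ⟨L', ?_, hred, hprod⟩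
        rw [insert_complement hPq]
        unfold letters
        beta_reduce
        exact hsubl
    have := hmax _ hface (Finset.subset_insert q F)
    exact hPq (this ▸ Finset.mem_insert_self q F)
  have heq : L' = complement Q F := hL'.eq_of_length hlen
  rw [← heq]
  exact ⟨hred, hprod⟩

theorem isFacet_of_len {Q : List B} {w : W} {F : Finset ℕ}
    (hsub : F ⊆ Finset.range Q.length)
    (hprod : π (complement Q F) = w)
    (hlen : (complement Q F).length = cs.length w) :
    IsFacet cs Q w F := by
  have hred : cs.IsReduced (complement Q F) := by
    unfold CoxeterSystem.IsReduced
    rw [hprod, hlen]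
  constructor
  · exact ⟨hsub, complement Q F, List.Sublist.refl _, hred, hprod⟩
  · intro F' hF' hFF'
    obtain ⟨hsub', L'', hL'', hred'', hprod''⟩ := hF'
    have h1 : cs.length w ≤ (complement Q F').length := by
      have hLw : L''.length = cs.length w := by
        unfold CoxeterSystem.IsReduced at hred''
        rw [← hprod'']
        exact hred''.symm
      rw [← hLw]
      exact hL''.length_le
    have h2 : (complement Q F').Sublist (complement Q F) := complement_sublist Q hFF'
    have h3 : (complement Q F').length = (complement Q F).length :=
      le_antisymm h2.length_le (by omega)
    -- conclude F' = F via cardinalities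
    have hc1 : (complement Q F).length = Q.length - F.card := length_complement Q F hsub
    have hc2 : (complement Q F').length = Q.length - F'.card := length_complement Q F' hsub'
    have hcard1 : F.card ≤ Q.length := by
      have := Finset.card_le_card hsub
      simpa using this
    have hcard2 : F'.card ≤ Q.length := by
      have := Finset.card_le_card hsub'
      simpa using this
    have : F'.card ≤ F.card := by omega
    exact (Finset.eq_of_subset_of_card_le hFF' this).symm

/-! ### The root function on position lists, and the flip lemma -/

/-- The reflection attached to position `q` relative to the coface `G`. -/
noncomputable def rho (Q : List B) (G : Finset ℕ) (q : ℕ) : W :=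
  π (letters Q (fun p => p ∉ G ∧ p < q)) * s (Q.getD q default)
    * (π (letters Q (fun p => p ∉ G ∧ p < q)))⁻¹

theorem rootF_fst (Q : List B) (F : Finset ℕ) (q : ℕ) :
    (rootF cs Q F q).1 = rho cs Q F q := by
  rw [rootF, rootPair, rho, prefixProd_eq_letters]

theorem letters_append_last (Q : List B) (a : B) (P : ℕ → Prop) [DecidablePred P] :
    letters (Q ++ [a]) P = letters Q P ++ if P Q.length then [a] else [] := by
  unfold letters
  rw [List.length_append, List.length_singleton, filter_range_succ, map_append]
  congr 1
  · apply List.map_congr_left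
    intro p hp
    rw [List.mem_filter, List.mem_range] at hp
    exact List.getD_append Q [a] default p hp.1
  · by_cases h : P Q.length
    · rw [if_pos h, if_pos h, List.map_singleton,
        List.getD_append_right Q [a] default Q.length (le_refl _)]
      simp
    · rw [if_neg h, if_neg h]
      rfl

/-- The left inversion sequence of `letters Q P` is given by the `rho`-like map. -/
theorem leftInvSeq_letters (Q : List B) (P : ℕ → Prop) [DecidablePred P] :
    cs.leftInvSeq (letters Q P)
      = ((List.range Q.length).filter (fun p => P p)).map
        (fun q => π (letters Q (fun p => P p ∧ p < q)) * s (Q.getD q default)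
          * (π (letters Q (fun p => P p ∧ p < q)))⁻¹) := by
  induction Q using List.reverseRecOn with
  | nil => simp [letters]
  | append_singleton Q a ih =>
    rw [letters_append_last, List.length_append, List.length_singleton, filter_range_succ]
    have htail : ∀ q < Q.length,
        (π (letters Q (fun p => P p ∧ p < q)) * s (Q.getD q default)
          * (π (letters Q (fun p => P p ∧ p < q)))⁻¹)
        = (π (letters (Q ++ [a]) (fun p => P p ∧ p < q)) * s ((Q ++ [a]).getD q default)
          * (π (letters (Q ++ [a]) (fun p => P p ∧ p < q)))⁻¹) := by
      intro q hq
      have h1 : letters (Q ++ [a]) (fun p => P p ∧ p < q) = letters Q (fun p => P p ∧ p < q) := by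
        rw [letters_append_last, if_neg (fun hh => by omega), List.append_nil]
      rw [h1, List.getD_append Q [a] default q hq]

    by_cases hP : P Q.length
    · rw [if_pos hP, if_pos hP]
      have hconcat : letters Q P ++ [a] = (letters Q P).concat a := by
        rw [List.concat_eq_append]
      rw [hconcat, cs.leftInvSeq_concat, ih, List.map_append]
      rw [List.concat_eq_append]
      congr 1
      · apply List.map_congr_left
        intro q hq
        rw [List.mem_filter, List.mem_range] at hq
        exact htail q hq.1
      · rw [List.map_singleton]
        congr 1
        have h1 : letters (Q ++ [a]) (fun p => P p ∧ p < Q.length) = letters Q P := by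
          rw [letters_append_last, if_neg (fun hh => by omega), List.append_nil]
          apply letters_congr
          intro p hp
          simp [hp]
        have h2 : (Q ++ [a]).getD Q.length default = a := by
          rw [List.getD_append_right Q [a] default Q.length (le_refl _)]
          simp
        rw [h1, h2]
    · rw [if_neg hP, if_neg hP, List.append_nil, List.append_nil, ih]
      apply List.map_congr_left
      intro q hq
      rw [List.mem_filter, List.mem_range] at hq
      exact htail q hq.1

/-- Relation between the complement product of `G` and of `insert q G`. -/
theorem insert_complement_prod {Q : List B} {G : Finset ℕ} {q : ℕ}
    (hq : q ∉ G) (hqN : q < Q.length) :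
    π (complement Q G) = rho cs Q G q * π (complement Q (insert q G)) := by
  have hsplit := letters_split_mem Q (fun p => p ∉ G) q (by simpa using hq) hqN
  have hsplit2 := letters_split_not Q (fun p => p ∉ G ∧ p ≠ q) q (by simp)
  have hX : letters Q (fun p => (p ∉ G ∧ p ≠ q) ∧ p < q) = letters Q (fun p => p ∉ G ∧ p < q) := by
    apply letters_congr
    intro p _
    constructor
    · rintro ⟨⟨h1, _⟩, h3⟩; exact ⟨h1, h3⟩
    · rintro ⟨h1, h3⟩; exact ⟨⟨h1, by omega⟩, h3⟩
  have hY : letters Q (fun p => (p ∉ G ∧ p ≠ q) ∧ q < p) = letters Q (fun p => p ∉ G ∧ q < p) := by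
    apply letters_congr
    intro p _
    constructor
    · rintro ⟨⟨h1, _⟩, h3⟩; exact ⟨h1, h3⟩
    · rintro ⟨h1, h3⟩; exact ⟨⟨h1, by omega⟩, h3⟩
  beta_reduce at hsplit hsplit2
  rw [complement_eq_letters, hsplit, insert_complement hq, hsplit2, hX, hY]
  rw [cs.wordProd_append, cs.wordProd_append, cs.wordProd_cons]
  unfold rho
  group

theorem rho_mul_self (Q : List B) (G : Finset ℕ) (q : ℕ) :
    rho cs Q G q * rho cs Q G q = 1 := by
  unfold rho
  set u := π (letters Q (fun p => p ∉ G ∧ p < q)) with hu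
  calc u * s (Q.getD q default) * u⁻¹ * (u * s (Q.getD q default) * u⁻¹)
      = u * (s (Q.getD q default) * s (Q.getD q default)) * u⁻¹ := by group
    _ = 1 := by rw [cs.simple_mul_simple_self]; group

/-- All facet extensions of a coface share the same `rho` value. -/
theorem facet_insert_rho_eq {Q : List B} {w : W} {G : Finset ℕ} {q : ℕ}
    (hq : q ∉ G) (hfac : IsFacet cs Q w (insert q G)) :
    rho cs Q G q = π (complement Q G) * w⁻¹ := by
  have hqN : q < Q.length := by
    have := hfac.1.1 (Finset.mem_insert_self q G)
    simpa using this
  have hprod := (facet_complement_reduced cs hfac).2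
  have h := insert_complement_prod cs hq hqN
  rw [hprod] at h
  rw [h]
  group

/-- Characterization of facet extensions of a coface via `rho`. -/
theorem isFacet_insert_iff {Q : List B} {w : W} {G : Finset ℕ}
    (hGsub : G ⊆ Finset.range Q.length)
    (hlenG : (complement Q G).length = cs.length w + 1)
    {q : ℕ} (hq : q ∉ G) (hqN : q < Q.length) :
    IsFacet cs Q w (insert q G) ↔ rho cs Q G q = π (complement Q G) * w⁻¹ := by
  constructor
  · exact facet_insert_rho_eq cs hq
  · intro hrho
    have hprod : π (complement Q (insert q G)) = w := by
      have h := insert_complement_prod cs hq hqN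
      have hrr := rho_mul_self cs Q G q
      have h3 : π (complement Q (insert q G)) = rho cs Q G q * π (complement Q G) := by
        rw [h, ← mul_assoc, hrr, one_mul]
      have hinv : rho cs Q G q = w * (π (complement Q G))⁻¹ := by
        have hii : (rho cs Q G q)⁻¹ = rho cs Q G q := inv_eq_of_mul_eq_one_right hrr
        rw [← hii, hrho]
        group
      rw [h3, hinv]
      group
    apply isFacet_of_len cs _ hprod
    · -- length of the complement of the insertion
      have hsub' : insert q G ⊆ Finset.range Q.length := by
        intro x hx
        rcases Finset.mem_insert.mp hx with rfl | hx
        · exact Finset.mem_range.mpr hqN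
        · exact hGsub hx
      have h1 : (complement Q (insert q G)).length = Q.length - (insert q G).card :=
        length_complement Q _ hsub'
      have h2 : (complement Q G).length = Q.length - G.card := length_complement Q G hGsub
      have h3 : (insert q G).card = G.card + 1 := Finset.card_insert_of_notMem hq
      have h4 : G.card + 1 ≤ Q.length := by
        rw [← h3]
        have := Finset.card_le_card (show insert q G ⊆ Finset.range Q.length from by
          intro x hx
          rcases Finset.mem_insert.mp hx with rfl | hx
          · exact Finset.mem_range.mpr hqN
          · exact hGsub hx)
        simpa using this
      omega
    · intro x hx
      rcases Finset.mem_insert.mp hx with rfl | hx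
      · exact Finset.mem_range.mpr hqN
      · exact hGsub hx

/-- The flip: a coface of a facet extends to a second facet. -/
theorem flip_exists {Q : List B} {w : W} {G : Finset ℕ}
    (hGsub : G ⊆ Finset.range Q.length)
    (hlenG : (complement Q G).length = cs.length w + 1)
    (hlen_le : cs.length (π (complement Q G)) ≤ cs.length w)
    {q₁ : ℕ} (hq₁ : q₁ ∉ G) (hfac : IsFacet cs Q w (insert q₁ G)) :
    ∃ q₂, q₂ ∉ G ∧ q₂ ≠ q₁ ∧ IsFacet cs Q w (insert q₂ G) := by
  classical
  set z := π (complement Q G) with hz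
  set t := z * w⁻¹ with ht
  have hq₁N : q₁ < Q.length := by
    have := hfac.1.1 (Finset.mem_insert_self q₁ G)
    simpa using this
  have hrho₁ : rho cs Q G q₁ = t := facet_insert_rho_eq cs hq₁ hfac
  -- count t in the left inversion sequence of `complement Q G`
  have hlis : cs.leftInvSeq (complement Q G)
      = ((List.range Q.length).filter (fun p => p ∉ G)).map (rho cs Q G) := by
    rw [complement_eq_letters, leftInvSeq_letters]
    rfl
  set pl := (List.range Q.length).filter (fun p => (p ∉ G : Prop)) with hpl
  have hcount : List.count t (cs.leftInvSeq (complement Q G))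
      = (pl.filter (fun x => rho cs Q G x = t)).length := by
    rw [hlis, List.count, List.countP_map, hpl, ← List.countP_eq_length_filter]
    apply List.countP_congr
    intro x _
    by_cases h : rho cs Q G x = t <;> simp [h]
  have htz : t * z = w := by
    rw [← hrho₁]
    have h := insert_complement_prod cs hq₁ hq₁N
    rw [(facet_complement_reduced cs hfac).2] at h
    rw [← hz] at h
    rw [h, ← mul_assoc, rho_mul_self, one_mul]
  have hnotinv : ¬ cs.IsLeftInversion (π (complement Q G)) t := by
    rintro ⟨-, habs⟩
    rw [← hz, htz] at habs
    exact absurd habs (not_lt.mpr hlen_le)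
  have heven0 : ((pl.filter (fun x => rho cs Q G x = t)).length : ZMod 2) = 0 := by
    rw [← hcount]
    exact count_lis_even_of_not_inversion cs _ t hnotinv
  set J := pl.filter (fun x => rho cs Q G x = t) with hJ
  have heven : 2 ∣ J.length := by
    rwa [ZMod.natCast_eq_zero_iff] at heven0
  have hq₁J : q₁ ∈ J := by
    rw [hJ, List.mem_filter]
    refine ⟨?_, by simpa using hrho₁⟩
    rw [hpl, List.mem_filter, List.mem_range]
    exact ⟨by simpa using hq₁N, by simpa using hq₁⟩
  have hJ2 : 2 ≤ J.length := by
    have h1 : 1 ≤ J.length := List.length_pos_iff.mpr (List.ne_nil_of_mem hq₁J)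
    omega
  have hJnd : J.Nodup := (List.nodup_range.filter _).filter _
  -- extract a second element
  obtain ⟨q₂, hq₂J, hq₂ne⟩ : ∃ x ∈ J, x ≠ q₁ := by
    match J, hJ2, hJnd, hq₁J with
    | x :: y :: rest, _, hnd, hmem =>
      by_cases hx : x = q₁
      · refine ⟨y, by simp, ?_⟩
        have : x ≠ y := by
          have := List.nodup_cons.mp hnd
          intro h
          exact this.1 (h ▸ (List.mem_cons_self : y ∈ y :: rest))
        omega
      · exact ⟨x, by simp, hx⟩
  rw [hJ, List.mem_filter] at hq₂J
  obtain ⟨hq₂pl, hq₂rho⟩ := hq₂J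
  rw [hpl, List.mem_filter, List.mem_range] at hq₂pl
  have hq₂G : q₂ ∉ G := by simpa using hq₂pl.2
  have hq₂N : q₂ < Q.length := hq₂pl.1
  refine ⟨q₂, hq₂G, hq₂ne, ?_⟩
  rw [isFacet_insert_iff cs hGsub hlenG hq₂G hq₂N]
  have hq₂t : rho cs Q G q₂ = t := by simpa using hq₂rho
  rw [hq₂t, ht, hz]


/-! ### Facet correspondences for appending a letter -/

theorem complement_append_mem {Q : List B} {a : B} {F : Finset ℕ} (hm : Q.length ∈ F) :
    complement (Q ++ [a]) F = complement Q (F.erase Q.length) := by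
  rw [complement_eq_letters, complement_eq_letters, letters_append_last,
    if_neg (by simpa using hm), List.append_nil]
  apply letters_congr
  intro p hp
  rw [Finset.mem_erase]
  constructor
  · intro h hh
    exact h hh.2
  · intro h hh
    exact h ⟨by omega, hh⟩

theorem complement_append_not {Q : List B} {a : B} {F : Finset ℕ} (hm : Q.length ∉ F) :
    complement (Q ++ [a]) F = complement Q F ++ [a] := by
  rw [complement_eq_letters, complement_eq_letters, letters_append_last,
    if_pos (by simpa using hm)]

theorem facet_subset_range {Q : List B} {w : W} {F : Finset ℕ} (h : IsFacet cs Q w F) :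
    F ⊆ Finset.range Q.length := h.1.1

theorem isFacet_append_mem {Q : List B} {a : B} {w : W} {F : Finset ℕ}
    (h : IsFacet cs (Q ++ [a]) w F) (hm : Q.length ∈ F) :
    IsFacet cs Q w (F.erase Q.length) := by
  obtain ⟨hred, hprod⟩ := facet_complement_reduced cs h
  rw [complement_append_mem hm] at hred hprod
  apply isFacet_of_len cs _ hprod
  · unfold CoxeterSystem.IsReduced at hred
    rw [← hprod]
    exact hred.symm
  · intro x hx
    rw [Finset.mem_erase] at hx
    have := facet_subset_range cs h hx.2
    rw [Finset.mem_range] at this ⊢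
    rw [List.length_append, List.length_singleton] at this
    omega

theorem isFacet_append_insert {Q : List B} {a : B} {w : W} {F₀ : Finset ℕ}
    (h : IsFacet cs Q w F₀) :
    IsFacet cs (Q ++ [a]) w (insert Q.length F₀) := by
  obtain ⟨hred, hprod⟩ := facet_complement_reduced cs h
  have hm : Q.length ∉ F₀ := by
    intro hh
    have := facet_subset_range cs h hh
    rw [Finset.mem_range] at this
    omega
  have hc : complement (Q ++ [a]) (insert Q.length F₀) = complement Q F₀ := by
    rw [complement_append_mem (Finset.mem_insert_self _ _), Finset.erase_insert hm]
  apply isFacet_of_len cs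
  · intro x hx
    rw [Finset.mem_range, List.length_append, List.length_singleton]
    rcases Finset.mem_insert.mp hx with rfl | hx
    · omega
    · have := facet_subset_range cs h hx
      rw [Finset.mem_range] at this
      omega
  · rw [hc]
    exact hprod
  · rw [hc]
    unfold CoxeterSystem.IsReduced at hred
    rw [← hprod]
    exact hred.symm

theorem isFacet_append_not {Q : List B} {a : B} {w : W} {F : Finset ℕ}
    (h : IsFacet cs (Q ++ [a]) w F) (hm : Q.length ∉ F) :
    IsFacet cs Q (w * s a) F ∧ cs.length (w * s a) < cs.length w := by
  obtain ⟨hred, hprod⟩ := facet_complement_reduced cs h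
  rw [complement_append_not hm] at hred hprod
  have hprod' : π (complement Q F) = w * s a := by
    rw [cs.wordProd_append] at hprod
    simp only [cs.wordProd_singleton] at hprod
    rw [← hprod]
    rw [mul_assoc, cs.simple_mul_simple_self, mul_one]
  unfold CoxeterSystem.IsReduced at hred
  rw [hprod] at hred
  rw [List.length_append, List.length_singleton] at hred
  have hlen1 : cs.length (w * s a) ≤ (complement Q F).length :=
    hprod' ▸ cs.length_wordProd_le (complement Q F)
  have hlen2 : cs.length w ≤ cs.length (w * s a) + 1 := by
    have := cs.length_mul_le (w * s a) (s a)
    rw [mul_assoc, cs.simple_mul_simple_self, mul_one, cs.length_simple] at this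
    exact this
  have hlen : (complement Q F).length = cs.length (w * s a) := by omega
  have hlt : cs.length (w * s a) < cs.length w := by omega
  refine ⟨isFacet_of_len cs ?_ hprod' hlen, hlt⟩
  intro x hx
  have := facet_subset_range cs h hx
  rw [Finset.mem_range] at this ⊢
  rw [List.length_append, List.length_singleton] at this
  have hxm : x ≠ Q.length := fun hh => hm (hh ▸ hx)
  omega

theorem isFacet_append_of_not {Q : List B} {a : B} {w : W} {F : Finset ℕ}
    (hlt : cs.length (w * s a) < cs.length w)
    (h : IsFacet cs Q (w * s a) F) :
    IsFacet cs (Q ++ [a]) w F := by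
  obtain ⟨hred, hprod⟩ := facet_complement_reduced cs h
  have hm : Q.length ∉ F := by
    intro hh
    have := facet_subset_range cs h hh
    rw [Finset.mem_range] at this
    omega
  unfold CoxeterSystem.IsReduced at hred
  rw [hprod] at hred
  apply isFacet_of_len cs
  · intro x hx
    have := facet_subset_range cs h hx
    rw [Finset.mem_range] at this ⊢
    rw [List.length_append, List.length_singleton]
    omega
  · rw [complement_append_not hm, cs.wordProd_append]
    simp only [cs.wordProd_singleton]
    rw [hprod, mul_assoc, cs.simple_mul_simple_self, mul_one]
  · rw [complement_append_not hm, List.length_append, List.length_singleton, ← hred]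
    have := cs.length_mul_simple w a
    rcases this with hh | hh <;> omega

/-! ### Flips and connectivity -/

/-- Two facets related by a flip at positions avoiding `K`. -/
def Flip (Q : List B) (w : W) (K : Finset ℕ) (F F' : Finset ℕ) : Prop :=
  ∃ q₁ q₂ G, q₁ ∉ G ∧ q₂ ∉ G ∧ q₁ ≠ q₂ ∧ q₁ ∉ K ∧ q₂ ∉ K ∧
    F = insert q₁ G ∧ F' = insert q₂ G ∧ IsFacet cs Q w F ∧ IsFacet cs Q w F'

theorem flip_symm {Q : List B} {w : W} {K F F' : Finset ℕ} (h : Flip cs Q w K F F') :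
    Flip cs Q w K F' F := by
  obtain ⟨q₁, q₂, G, h1, h2, h3, h4, h5, h6, h7, h8, h9⟩ := h
  exact ⟨q₂, q₁, G, h2, h1, h3.symm, h5, h4, h7, h6, h9, h8⟩

theorem facets_connected (Q : List B) : ∀ (w : W) (K : Finset ℕ) (F F' : Finset ℕ),
    IsFacet cs Q w F → IsFacet cs Q w F' → K ⊆ F → K ⊆ F' →
    Relation.ReflTransGen (Flip cs Q w K) F F' := by
  induction Q using List.reverseRecOn with
  | nil =>
    intro w K F F' hF hF' _ _
    have h1 : F = ∅ := by
      have := facet_subset_range cs hF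
      simpa [Finset.subset_empty] using this
    have h2 : F' = ∅ := by
      have := facet_subset_range cs hF'
      simpa [Finset.subset_empty] using this
    rw [h1, h2]
  | append_singleton Q a ih =>
    intro w K F F' hF hF' hKF hKF'
    set m := Q.length with hm
    -- Both facets contain m: reduce to Q.
    have hboth : m ∈ F → m ∈ F' → Relation.ReflTransGen (Flip cs (Q ++ [a]) w K) F F' := by
      intro hmF hmF'
      have h1 := isFacet_append_mem cs hF hmF
      have h2 := isFacet_append_mem cs hF' hmF'
      have hpath := ih w (K.erase m) (F.erase m) (F'.erase m) h1 h2
        (fun x hx => by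
          rw [Finset.mem_erase] at hx ⊢
          exact ⟨hx.1, hKF hx.2⟩)
        (fun x hx => by
          rw [Finset.mem_erase] at hx ⊢
          exact ⟨hx.1, hKF' hx.2⟩)
      have hlift : Relation.ReflTransGen (Flip cs (Q ++ [a]) w K)
          (insert m (F.erase m)) (insert m (F'.erase m)) := by
        apply Relation.ReflTransGen.lift (fun G => insert m G) _ _ _ hpath
        rintro G G' ⟨p₁, p₂, G₀, hp₁, hp₂, hne, hp₁K, hp₂K, rfl, rfl, hf1, hf2⟩
        have hp₁m : p₁ ≠ m := by
          have := facet_subset_range cs hf1 (Finset.mem_insert_self _ _)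
          rw [Finset.mem_range] at this
          omega
        have hp₂m : p₂ ≠ m := by
          have := facet_subset_range cs hf2 (Finset.mem_insert_self _ _)
          rw [Finset.mem_range] at this
          omega
        refine ⟨p₁, p₂, insert m G₀, ?_, ?_, hne, ?_, ?_, ?_, ?_, ?_, ?_⟩
        · rw [Finset.mem_insert]
          push_neg
          exact ⟨hp₁m, hp₁⟩
        · rw [Finset.mem_insert]
          push_neg
          exact ⟨hp₂m, hp₂⟩
        · intro hh
          rw [Finset.mem_erase] at hp₁K
          push_neg at hp₁K
          exact absurd (hp₁K hp₁m) (fun hhh => hhh hh)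
        · intro hh
          rw [Finset.mem_erase] at hp₂K
          push_neg at hp₂K
          exact absurd (hp₂K hp₂m) (fun hhh => hhh hh)
        · rw [Finset.insert_comm]
        · rw [Finset.insert_comm]
        · exact isFacet_append_insert cs hf1
        · exact isFacet_append_insert cs hf2
      rwa [Finset.insert_erase hmF, Finset.insert_erase hmF'] at hlift
    by_cases hmK : m ∈ K
    · exact hboth (hKF hmK) (hKF' hmK)
    by_cases hl : cs.length (w * s a) < cs.length w
    · -- bridge: move to facets avoiding m, then connect via the shorter target
      have hbridge : ∀ (Fx : Finset ℕ), IsFacet cs (Q ++ [a]) w Fx → K ⊆ Fx →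
          ∃ Fy, Relation.ReflTransGen (Flip cs (Q ++ [a]) w K) Fx Fy ∧ m ∉ Fy ∧ K ⊆ Fy ∧
            IsFacet cs (Q ++ [a]) w Fy := by
        intro Fx hFx hKFx
        by_cases hmFx : m ∈ Fx
        · set G := Fx.erase m with hG
          have hmG : m ∉ G := Finset.notMem_erase m Fx
          have hKG : K ⊆ G := fun x hx =>
            Finset.mem_erase.mpr ⟨fun hh => hmK (hh ▸ hx), hKFx hx⟩
          have hGsub : G ⊆ Finset.range (Q ++ [a]).length := fun x hx =>
            facet_subset_range cs hFx (Finset.mem_of_mem_erase hx)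
          obtain ⟨hredx, hprodx⟩ := facet_complement_reduced cs hFx
          have hcc : complement (Q ++ [a]) Fx = complement Q G := by
            rw [complement_append_mem hmFx]
          have hzval : π (complement (Q ++ [a]) G) = w * s a := by
            rw [complement_append_not hmG, cs.wordProd_append]
            simp only [cs.wordProd_singleton]
            rw [← hcc, hprodx]
          -- lengths
          have hlx : (complement (Q ++ [a]) Fx).length = cs.length w := by
            unfold CoxeterSystem.IsReduced at hredx
            rw [← hprodx]
            exact hredx.symm
          have hcardx : (complement (Q ++ [a]) Fx).length = (Q ++ [a]).length - Fx.card :=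
            length_complement _ _ (facet_subset_range cs hFx)
          have hcardG : (complement (Q ++ [a]) G).length = (Q ++ [a]).length - G.card :=
            length_complement _ _ hGsub
          have hFxcard : G.card = Fx.card - 1 := by
            rw [hG, Finset.card_erase_of_mem hmFx]
          have hFxpos : 1 ≤ Fx.card := Finset.card_pos.mpr ⟨m, hmFx⟩
          have hcardle : Fx.card ≤ (Q ++ [a]).length := by
            have := Finset.card_le_card (facet_subset_range cs hFx)
            simpa using this
          have hlenG : (complement (Q ++ [a]) G).length = cs.length w + 1 := by omega
          have hlen_le : cs.length (π (complement (Q ++ [a]) G)) ≤ cs.length w := by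
            rw [hzval]
            omega
          have hfacFx : IsFacet cs (Q ++ [a]) w (insert m G) := by
            rwa [hG, Finset.insert_erase hmFx]
          obtain ⟨q₂, hq₂G, hq₂m, hq₂fac⟩ := flip_exists cs hGsub hlenG hlen_le hmG hfacFx
          refine ⟨insert q₂ G, Relation.ReflTransGen.single ?_, ?_, ?_, hq₂fac⟩
          · exact ⟨m, q₂, G, hmG, hq₂G, fun hh => hq₂m hh.symm, hmK,
              fun hh => hq₂G (hKG hh), (Finset.insert_erase hmFx).symm, rfl, hFx, hq₂fac⟩
          · rw [Finset.mem_insert]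
            push_neg
            exact ⟨fun hh => hq₂m hh.symm, hmG⟩
          · exact fun x hx => Finset.mem_insert_of_mem (hKG hx)
        · exact ⟨Fx, Relation.ReflTransGen.refl, hmFx, hKFx, hFx⟩
      obtain ⟨Fy, hpathF, hmFy, hKFy, hfacFy⟩ := hbridge F hF hKF
      obtain ⟨Fy', hpathF', hmFy', hKFy', hfacFy'⟩ := hbridge F' hF' hKF'
      have h1 := (isFacet_append_not cs hfacFy hmFy).1
      have h2 := (isFacet_append_not cs hfacFy' hmFy').1
      have hmid := ih (w * s a) K Fy Fy' h1 h2 hKFy hKFy'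
      have hmid' : Relation.ReflTransGen (Flip cs (Q ++ [a]) w K) Fy Fy' := by
        apply Relation.ReflTransGen.lift id _ _ _ hmid
        rintro G G' ⟨p₁, p₂, G₀, hp₁, hp₂, hne, hp₁K, hp₂K, rfl, rfl, hf1, hf2⟩
        exact ⟨p₁, p₂, G₀, hp₁, hp₂, hne, hp₁K, hp₂K, rfl, rfl,
          isFacet_append_of_not cs hl hf1, isFacet_append_of_not cs hl hf2⟩
      have hsymmpath : Relation.ReflTransGen (Flip cs (Q ++ [a]) w K) Fy' F' :=
        (@Relation.ReflTransGen.stdSymm _ _ ⟨fun _ _ h => flip_symm cs h⟩).symm _ _ hpathF'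
      exact (hpathF.trans hmid').trans hsymmpath
    · have hall : ∀ (Fx : Finset ℕ), IsFacet cs (Q ++ [a]) w Fx → m ∈ Fx := by
        intro Fx hFx
        by_contra hmFx
        exact hl (isFacet_append_not cs hFx hmFx).2
      exact hboth (hall F hF) (hall F' hF')

/-! ### Root function transfer across flips -/

theorem mem_insert_iff_of_ne {S : Finset ℕ} {x y : ℕ} (h : x ≠ y) :
    x ∈ insert y S ↔ x ∈ S := by
  rw [Finset.mem_insert]
  constructor
  · rintro (rfl | h2)
    · exact absurd rfl h
    · exact h2
  · exact Or.inr

theorem rho_congr {Q : List B} {F F' : Finset ℕ} (q : ℕ)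
    (h : ∀ p, p < q → (p ∈ F ↔ p ∈ F')) : rho cs Q F q = rho cs Q F' q := by
  unfold rho
  rw [letters_congr (Q := Q) (P := fun p => p ∉ F ∧ p < q) (R := fun p => p ∉ F' ∧ p < q)
    (fun p _ => by
      constructor
      · rintro ⟨h1, h2⟩; exact ⟨fun hh => h1 ((h p h2).mpr hh), h2⟩
      · rintro ⟨h1, h2⟩; exact ⟨fun hh => h1 ((h p h2).mp hh), h2⟩)]

theorem simple_conj_algebra (A Bw sq s₁ : W) (hs : s₁⁻¹ = s₁) :
    (A * s₁ * Bw) * sq * (A * s₁ * Bw)⁻¹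
      = A * s₁ * A⁻¹ * (A * Bw * sq * (A * Bw)⁻¹) * (A * s₁ * A⁻¹) := by
  have h2 : (A * s₁ * Bw)⁻¹ = Bw⁻¹ * s₁ * A⁻¹ := by
    rw [mul_inv_rev, mul_inv_rev, hs]
    group
  rw [h2]
  group

/-- Core flip-transfer computation, assuming `q₁ < q₂`. -/
theorem flip_rho_core {Q : List B} {w : W} {G : Finset ℕ} {q₁ q₂ : ℕ}
    (hq₁G : q₁ ∉ G) (hq₂G : q₂ ∉ G) (hlt : q₁ < q₂)
    (hF : IsFacet cs Q w (insert q₁ G)) (hF' : IsFacet cs Q w (insert q₂ G))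
    {q : ℕ} (hqG : q ∈ G) :
    rho cs Q (insert q₂ G) q = rho cs Q (insert q₁ G) q ∨
      rho cs Q (insert q₂ G) q
        = rho cs Q G q₁ * rho cs Q (insert q₁ G) q * rho cs Q G q₁ := by
  have hq₁N : q₁ < Q.length := by
    simpa using facet_subset_range cs hF (Finset.mem_insert_self _ _)
  have hq₂N : q₂ < Q.length := by
    simpa using facet_subset_range cs hF' (Finset.mem_insert_self _ _)
  have hqq₁ : q ≠ q₁ := fun h => hq₁G (h ▸ hqG)
  have hqq₂ : q ≠ q₂ := fun h => hq₂G (h ▸ hqG)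
  have hsinv : (s (Q.getD q₁ default))⁻¹ = s (Q.getD q₁ default) := cs.inv_simple _
  rcases lt_trichotomy q q₁ with hlt1 | heq1 | hgt1
  · -- q below both: roots agree
    left
    have e1 : rho cs Q (insert q₂ G) q = rho cs Q G q :=
      rho_congr cs q (fun p hp => mem_insert_iff_of_ne (by omega))
    have e2 : rho cs Q (insert q₁ G) q = rho cs Q G q :=
      rho_congr cs q (fun p hp => mem_insert_iff_of_ne (by omega))
    rw [e1, e2]
  · exact absurd heq1 hqq₁
  rcases lt_trichotomy q q₂ with hlt2 | heq2 | hgt2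
  · -- q₁ < q < q₂ : conjugation case
    right
    unfold rho
    have hu' : letters Q (fun p => p ∉ insert q₂ G ∧ p < q)
        = letters Q (fun p => p ∉ G ∧ p < q₁)
          ++ Q.getD q₁ default :: letters Q (fun p => (p ∉ G ∧ p < q) ∧ q₁ < p) := by
      have h0 : letters Q (fun p => p ∉ insert q₂ G ∧ p < q)
          = letters Q (fun p => p ∉ G ∧ p < q) :=
        letters_congr (fun p hp => by
          constructor
          · rintro ⟨h1, h2⟩
            exact ⟨fun hh => h1 (Finset.mem_insert_of_mem hh), h2⟩
          · rintro ⟨h1, h2⟩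
            exact ⟨fun hh => h1 ((mem_insert_iff_of_ne (by omega)).mp hh), h2⟩)
      rw [h0, letters_split_mem Q (fun p => p ∉ G ∧ p < q) q₁ ⟨hq₁G, by omega⟩ hq₁N]
      congr 1
      exact letters_congr (fun p hp => by
        constructor
        · rintro ⟨⟨h1, _⟩, h3⟩; exact ⟨h1, h3⟩
        · rintro ⟨h1, h3⟩; exact ⟨⟨h1, by omega⟩, h3⟩)
    have hu : letters Q (fun p => p ∉ insert q₁ G ∧ p < q)
        = letters Q (fun p => p ∉ G ∧ p < q₁)
          ++ letters Q (fun p => (p ∉ G ∧ p < q) ∧ q₁ < p) := by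
      rw [letters_split_not Q (fun p => p ∉ insert q₁ G ∧ p < q) q₁
        (by rintro ⟨h1, _⟩; exact h1 (Finset.mem_insert_self _ _))]
      congr 1
      · exact letters_congr (fun p hp => by
          constructor
          · rintro ⟨⟨h1, _⟩, h3⟩
            exact ⟨fun hh => h1 (Finset.mem_insert_of_mem hh), h3⟩
          · rintro ⟨h1, h3⟩
            exact ⟨⟨fun hh => h1 ((mem_insert_iff_of_ne (by omega)).mp hh), by omega⟩, h3⟩)
      · exact letters_congr (fun p hp => by
          constructor
          · rintro ⟨⟨h1, h2⟩, h3⟩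
            exact ⟨⟨fun hh => h1 (Finset.mem_insert_of_mem hh), h2⟩, h3⟩
          · rintro ⟨⟨h1, h2⟩, h3⟩
            exact ⟨⟨fun hh => h1 ((mem_insert_iff_of_ne (by omega)).mp hh), h2⟩, h3⟩)
    rw [hu', hu, cs.wordProd_append, cs.wordProd_append, cs.wordProd_cons]
    rw [← mul_assoc (π (letters Q fun p => p ∉ G ∧ p < q₁)) (s (Q.getD q₁ default))]
    exact simple_conj_algebra _ _ _ _ hsinv
  · exact absurd heq2 hqq₂
  · -- q above both: roots agree
    left
    unfold rho
    have hu : letters Q (fun p => p ∉ insert q₁ G ∧ p < q)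
        = (letters Q (fun p => p ∉ G ∧ p < q₁)
            ++ letters Q (fun p => (p ∉ G ∧ p < q₂) ∧ q₁ < p))
          ++ Q.getD q₂ default :: letters Q (fun p => (p ∉ G ∧ p < q) ∧ q₂ < p) := by
      rw [letters_split_mem Q (fun p => p ∉ insert q₁ G ∧ p < q) q₂
        ⟨fun hh => hq₂G ((mem_insert_iff_of_ne (by omega)).mp hh), by omega⟩ hq₂N]
      congr 1
      · rw [letters_split_not Q (fun p => (p ∉ insert q₁ G ∧ p < q) ∧ p < q₂) q₁
          (by rintro ⟨⟨h1, _⟩, _⟩; exact h1 (Finset.mem_insert_self _ _))]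
        congr 1
        · exact letters_congr (fun p hp => by
            constructor
            · rintro ⟨⟨⟨h1, _⟩, _⟩, h4⟩
              exact ⟨fun hh => h1 (Finset.mem_insert_of_mem hh), h4⟩
            · rintro ⟨h1, h4⟩
              exact ⟨⟨⟨fun hh => h1 ((mem_insert_iff_of_ne (by omega)).mp hh), by omega⟩,
                by omega⟩, h4⟩)
        · exact letters_congr (fun p hp => by
            constructor
            · rintro ⟨⟨⟨h1, _⟩, h3⟩, h4⟩
              exact ⟨⟨fun hh => h1 (Finset.mem_insert_of_mem hh), h3⟩, h4⟩
            · rintro ⟨⟨h1, h3⟩, h4⟩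
              exact ⟨⟨⟨fun hh => h1 ((mem_insert_iff_of_ne (by omega)).mp hh), by omega⟩,
                h3⟩, h4⟩)
      · congr 1
        exact letters_congr (fun p hp => by
          constructor
          · rintro ⟨⟨h1, h2⟩, h4⟩
            exact ⟨⟨fun hh => h1 (Finset.mem_insert_of_mem hh), h2⟩, h4⟩
          · rintro ⟨⟨h1, h2⟩, h4⟩
            exact ⟨⟨fun hh => h1 ((mem_insert_iff_of_ne (by omega)).mp hh), h2⟩, h4⟩)
    have hu' : letters Q (fun p => p ∉ insert q₂ G ∧ p < q)
        = letters Q (fun p => p ∉ G ∧ p < q₁)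
          ++ Q.getD q₁ default :: (letters Q (fun p => (p ∉ G ∧ p < q₂) ∧ q₁ < p)
            ++ letters Q (fun p => (p ∉ G ∧ p < q) ∧ q₂ < p)) := by
      rw [letters_split_mem Q (fun p => p ∉ insert q₂ G ∧ p < q) q₁
        ⟨fun hh => hq₁G ((mem_insert_iff_of_ne (by omega)).mp hh), by omega⟩ hq₁N]
      congr 1
      · exact letters_congr (fun p hp => by
          constructor
          · rintro ⟨⟨h1, _⟩, h3⟩
            exact ⟨fun hh => h1 (Finset.mem_insert_of_mem hh), h3⟩
          · rintro ⟨h1, h3⟩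
            exact ⟨⟨fun hh => h1 ((mem_insert_iff_of_ne (by omega)).mp hh), by omega⟩, h3⟩)
      · congr 1
        rw [letters_split_not Q (fun p => (p ∉ insert q₂ G ∧ p < q) ∧ q₁ < p) q₂
          (by rintro ⟨⟨h1, _⟩, _⟩; exact h1 (Finset.mem_insert_self _ _))]
        congr 1
        · exact letters_congr (fun p hp => by
            constructor
            · rintro ⟨⟨⟨h1, _⟩, h3⟩, h4⟩
              exact ⟨⟨fun hh => h1 (Finset.mem_insert_of_mem hh), h4⟩, h3⟩
            · rintro ⟨⟨h1, h4⟩, h3⟩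
              exact ⟨⟨⟨fun hh => h1 ((mem_insert_iff_of_ne (by omega)).mp hh), by omega⟩,
                h3⟩, h4⟩)
        · exact letters_congr (fun p hp => by
            constructor
            · rintro ⟨⟨⟨h1, h2⟩, _⟩, h4⟩
              exact ⟨⟨fun hh => h1 (Finset.mem_insert_of_mem hh), h2⟩, h4⟩
            · rintro ⟨⟨h1, h2⟩, h4⟩
              exact ⟨⟨⟨fun hh => h1 ((mem_insert_iff_of_ne (by omega)).mp hh), h2⟩,
                by omega⟩, h4⟩)
    -- the two `rho G` values agree
    have h_t12 : rho cs Q G q₁ = rho cs Q G q₂ :=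
      (facet_insert_rho_eq cs hq₁G hF).trans (facet_insert_rho_eq cs hq₂G hF').symm
    have hG2 : letters Q (fun p => p ∉ G ∧ p < q₂)
        = letters Q (fun p => p ∉ G ∧ p < q₁)
          ++ Q.getD q₁ default :: letters Q (fun p => (p ∉ G ∧ p < q₂) ∧ q₁ < p) := by
      rw [letters_split_mem Q (fun p => p ∉ G ∧ p < q₂) q₁ ⟨hq₁G, by omega⟩ hq₁N]
      congr 1
      exact letters_congr (fun p hp => by
        constructor
        · rintro ⟨⟨h1, _⟩, h3⟩; exact ⟨h1, h3⟩
        · rintro ⟨h1, h3⟩; exact ⟨⟨h1, by omega⟩, h3⟩)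
    rw [rho, rho, hG2, cs.wordProd_append, cs.wordProd_cons] at h_t12
    rw [hu, hu', cs.wordProd_append, cs.wordProd_append, cs.wordProd_cons,
      cs.wordProd_cons, cs.wordProd_append]
    set Aw := π (letters Q (fun p => p ∉ G ∧ p < q₁)) with hAw
    set Bw := π (letters Q (fun p => (p ∉ G ∧ p < q₂) ∧ q₁ < p)) with hBw
    set Cw := π (letters Q (fun p => (p ∉ G ∧ p < q) ∧ q₂ < p)) with hCw
    set s₁ := s (Q.getD q₁ default) with hs₁
    set s₂ := s (Q.getD q₂ default) with hs₂
    have hmid : Aw * s₁ * Aw⁻¹ = Aw * (s₁ * Bw) * s₂ * (Aw * (s₁ * Bw))⁻¹ := h_t12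
    have hkey : s₁ * Bw = Bw * s₂ := by
      have h2 : s₁ * Bw = (Aw * s₁)⁻¹ * (Aw * s₁ * Aw⁻¹) * (Aw * (s₁ * Bw)) := by group
      rw [h2, hmid]
      group
    have hbase : Aw * (s₁ * (Bw * Cw)) = Aw * Bw * (s₂ * Cw) := by
      have h3 : Aw * (s₁ * (Bw * Cw)) = Aw * ((s₁ * Bw) * Cw) := by group
      rw [h3, hkey]
      group
    rw [hbase, cs.wordProd_append]

/-- Transfer of `rho` values between flipped facets. -/
theorem flip_rho {Q : List B} {w : W} {G : Finset ℕ} {q₁ q₂ : ℕ}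
    (hq₁G : q₁ ∉ G) (hq₂G : q₂ ∉ G) (hne : q₁ ≠ q₂)
    (hF : IsFacet cs Q w (insert q₁ G)) (hF' : IsFacet cs Q w (insert q₂ G))
    {q : ℕ} (hqG : q ∈ G) :
    rho cs Q (insert q₂ G) q = rho cs Q (insert q₁ G) q ∨
      rho cs Q (insert q₂ G) q
        = rho cs Q G q₁ * rho cs Q (insert q₁ G) q * rho cs Q G q₁ := by
  rcases lt_trichotomy q₁ q₂ with h | h | h
  · exact flip_rho_core cs hq₁G hq₂G h hF hF' hqG
  · exact absurd h hne
  · have hsw := flip_rho_core cs hq₂G hq₁G h hF' hF hqG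
    have ht : rho cs Q G q₂ = rho cs Q G q₁ :=
      (facet_insert_rho_eq cs hq₂G hF').trans (facet_insert_rho_eq cs hq₁G hF).symm
    rcases hsw with h1 | h1
    · exact Or.inl h1.symm
    · right
      rw [ht] at h1
      have hinv := rho_mul_self cs Q G q₁
      rw [h1]
      symm
      calc rho cs Q G q₁ * (rho cs Q G q₁ * rho cs Q (insert q₂ G) q * rho cs Q G q₁)
            * rho cs Q G q₁
          = (rho cs Q G q₁ * rho cs Q G q₁) * rho cs Q (insert q₂ G) q
            * (rho cs Q G q₁ * rho cs Q G q₁) := by group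
        _ = rho cs Q (insert q₂ G) q := by rw [hinv]; group

/-- Membership of the root reflections in a subgroup is preserved by flips. -/
theorem flip_preserves (H : Subgroup W) {Q : List B} {w : W} {K F F' : Finset ℕ}
    (hflip : Flip cs Q w K F F')
    (hroots : ∀ q ∈ F, q ∉ K → rho cs Q F q ∈ H) :
    ∀ q ∈ F', q ∉ K → rho cs Q F' q ∈ H := by
  obtain ⟨q₁, q₂, G, hq₁G, hq₂G, hne, hq₁K, hq₂K, rfl, rfl, hf1, hf2⟩ := hflip
  have htmem : rho cs Q G q₁ ∈ H := by
    have e : rho cs Q (insert q₁ G) q₁ = rho cs Q G q₁ :=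
      rho_congr cs q₁ (fun p hp => mem_insert_iff_of_ne (by omega))
    rw [← e]
    exact hroots q₁ (Finset.mem_insert_self _ _) hq₁K
  intro q hq hqK
  rcases Finset.mem_insert.mp hq with rfl | hqG
  · -- q = q₂
    have e : rho cs Q (insert q G) q = rho cs Q G q :=
      rho_congr cs q (fun p hp => mem_insert_iff_of_ne (by omega))
    rw [e, (facet_insert_rho_eq cs hq₂G hf2).trans (facet_insert_rho_eq cs hq₁G hf1).symm]
    exact htmem
  · have hmem : rho cs Q (insert q₁ G) q ∈ H :=
      hroots q (Finset.mem_insert_of_mem hqG) hqK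
    rcases flip_rho cs hq₁G hq₂G hne hf1 hf2 hqG with h1 | h1
    · rw [h1]; exact hmem
    · rw [h1]
      exact H.mul_mem (H.mul_mem htmem hmem) htmem

theorem complement_prefix_range (Q₁ Q₂ : List B) :
    complement (Q₁ ++ Q₂) (Finset.range Q₁.length) = Q₂ := by
  induction Q₂ using List.reverseRecOn with
  | nil =>
    rw [List.append_nil, complement_eq_letters]
    unfold letters
    have h0 : (List.range Q₁.length).filter
        (fun p => decide (p ∉ Finset.range Q₁.length)) = [] := by
      rw [List.filter_eq_nil_iff]
      intro p hp
      rw [List.mem_range] at hp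
      simp [Finset.mem_range, hp]
    rw [h0]
    rfl
  | append_singleton Q₂ a ih =>
    rw [← List.append_assoc,
      complement_append_not (show (Q₁ ++ Q₂).length ∉ Finset.range Q₁.length by
        rw [Finset.mem_range, List.length_append]
        omega), ih]


/-- if a facet of `Δ(c·w₀(c), w₀)` contains a position of the prefix `c`
with letter `cᵢ`, then the roots of all its other positions lie in the standard
parabolic root subsystem avoiding `cᵢ`. -/
theorem facet_with_prefix_letter_parabolic (w₀ : W) (hw₀ : IsLongest cs w₀) [Finite W]
    (c : List B) (hc : IsCoxeterWord c) (wc : List B) (hwc : IsSortingWord cs c w₀ wc)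
    (F : Finset ℕ) (hF : IsFacet cs (c ++ wc) w₀ F)
    (i : ℕ) (hi : i < c.length) (hiF : i ∈ F)
    (q : ℕ) (hq : q ∈ F) (hne : q ≠ i) :
    (rootF cs (c ++ wc) F q).1 ∈
      Subgroup.closure (cs.simple '' {b : B | b ≠ c.getD i default}) := by
  classical
  obtain ⟨P, hSI, hwceq⟩ := hwc
  have hred : cs.IsReduced wc := by rw [hwceq]; exact hSI.2.1
  have hprodw : cs.wordProd wc = w₀ := by rw [hwceq]; exact hSI.2.2.1
  have hF₀ : IsFacet cs (c ++ wc) w₀ (Finset.range c.length) := by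
    apply isFacet_of_len cs
    · intro x hx
      rw [Finset.mem_range] at hx ⊢
      rw [List.length_append]
      omega
    · rw [complement_prefix_range]
      exact hprodw
    · rw [complement_prefix_range]
      unfold CoxeterSystem.IsReduced at hred
      rw [← hprodw]
      exact hred.symm
  have hpath := facets_connected cs (c ++ wc) w₀ {i} (Finset.range c.length) F hF₀ hF
    (by rw [Finset.singleton_subset_iff, Finset.mem_range]; exact hi)
    (by rw [Finset.singleton_subset_iff]; exact hiF)
  set H := Subgroup.closure (cs.simple '' {b : B | b ≠ c.getD i default}) with hH
  have hbase : ∀ q ∈ Finset.range c.length, q ∉ ({i} : Finset ℕ) →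
      rho cs (c ++ wc) (Finset.range c.length) q ∈ H := by
    intro q hq hqi
    rw [Finset.mem_range] at hq
    rw [Finset.mem_singleton] at hqi
    have hlet : letters (c ++ wc) (fun p => p ∉ Finset.range c.length ∧ p < q) = [] := by
      unfold letters
      have h0 : (List.range (c ++ wc).length).filter
          (fun p => decide (p ∉ Finset.range c.length ∧ p < q)) = [] := by
        rw [List.filter_eq_nil_iff]
        intro p _
        simp only [decide_eq_true_eq]
        rintro ⟨h1, h2⟩
        exact h1 (Finset.mem_range.mpr (by omega))
      rw [h0]
      rfl
    unfold rho
    rw [hlet, cs.wordProd_nil, one_mul, inv_one, mul_one]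
    have hQq : (c ++ wc).getD q default = c.getD q default :=
      List.getD_append c wc default q hq
    rw [hQq]
    apply Subgroup.subset_closure
    refine ⟨c.getD q default, ?_, rfl⟩
    simp only [Set.mem_setOf_eq]
    intro hcc
    apply hqi
    have h1 := List.getD_eq_getElem c default hq
    have h2 := List.getD_eq_getElem c default hi
    rw [h1, h2] at hcc
    exact (List.Nodup.getElem_inj_iff hc.1).mp hcc
  have hinv : ∀ G : Finset ℕ,
      Relation.ReflTransGen (Flip cs (c ++ wc) w₀ {i}) (Finset.range c.length) G →
      ∀ q' ∈ G, q' ∉ ({i} : Finset ℕ) → rho cs (c ++ wc) G q' ∈ H := by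
    intro G hpath'
    induction hpath' with
    | refl => exact hbase
    | tail hsteps hstep ih => exact flip_preserves cs H hstep ih
  have hfin := hinv F hpath q hq (by simpa using hne)
  rw [rootF_fst]
  exact hfin


end SubwordComplex
end
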